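/- arXiv:2312.12584 — 8 statements merged into one kernel-verified Lean document; each statement's English description precedes it below -/
import Mathlib

section
/- Let G be a directed n-vertex graph, 0 < α < 1, 0 < φ < 1, and let X_1,...,X_k be a sequence of nonempty vertex subsets partitioning V(G) with max_i |X_i| = αn, such that for all 1 ≤ i < k, writing X'_i = X_{i+1} ∪ ... ∪ X_k, either |E(X_i, X'_i)| ≤ φ·|X_i| or |E(X'_i, X_i)| ≤ φ·|X_i|. Then there exists a cut (A,B) in G with |A|, |B| ≥ min{(1-α)n/2, n/4} and |E_G(A,B)| ≤ φ·(|X_1| + ... + |X_{k-1}|). -/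
open scoped Classical

set_option maxHeartbeats 1600000

/-- Let `G` be a directed `n`-vertex graph, `0 < α < 1`, `0 < φ < 1`, and let
`X_1,...,X_k` be a sequence of nonempty vertex subsets partitioning `V(G)` with
`max_i |X_i| = αn`, such that for all `1 ≤ i < k`, writing
`X'_i = X_{i+1} ∪ ... ∪ X_k`, either `|E(X_i, X'_i)| ≤ φ·|X_i|` or
`|E(X'_i, X_i)| ≤ φ·|X_i|`. Then there exists a cut `(A,B)` in `G` with
`|A|, |B| ≥ min{(1-α)n/2, n/4}` and `|E_G(A,B)| ≤ φ·(|X_1| + ... + |X_{k-1}|)`. -/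
theorem stmt3 {V : Type*} [Fintype V] [DecidableEq V] (E : Finset (V × V))
    (α φ : ℝ) (k : ℕ) (X : Fin k → Finset V)
    (hα0 : 0 < α) (hα1 : α < 1) (hφ0 : 0 < φ) (hφ1 : φ < 1)
    (hne : ∀ i, (X i).Nonempty)
    (hdisj : ∀ i j, i ≠ j → Disjoint (X i) (X j))
    (hcover : Finset.univ.biUnion X = Finset.univ)
    (hmaxle : ∀ i, ((X i).card : ℝ) ≤ α * (Fintype.card V : ℝ))
    (hmaxeq : ∃ i, ((X i).card : ℝ) = α * (Fintype.card V : ℝ))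
    (hsparse : ∀ i : Fin k, (i : ℕ) < k - 1 →
      ((E.filter (fun e => e.1 ∈ X i ∧
          e.2 ∈ (Finset.univ.filter (fun j : Fin k => i < j)).biUnion X)).card : ℝ) ≤
        φ * ((X i).card : ℝ) ∨
      ((E.filter (fun e =>
          e.1 ∈ (Finset.univ.filter (fun j : Fin k => i < j)).biUnion X ∧
          e.2 ∈ X i)).card : ℝ) ≤ φ * ((X i).card : ℝ)) :
    ∃ A B : Finset V, A.Nonempty ∧ B.Nonempty ∧ Disjoint A B ∧ A ∪ B = Finset.univ ∧
      min ((1 - α) * (Fintype.card V : ℝ) / 2) ((Fintype.card V : ℝ) / 4)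
        ≤ (A.card : ℝ) ∧
      min ((1 - α) * (Fintype.card V : ℝ) / 2) ((Fintype.card V : ℝ) / 4)
        ≤ (B.card : ℝ) ∧
      ((E.filter (fun e => e.1 ∈ A ∧ e.2 ∈ B)).card : ℝ) ≤
        φ * ∑ i ∈ Finset.univ.filter (fun i : Fin k => (i : ℕ) < k - 1),
          ((X i).card : ℝ) := by

  classical
  set n := Fintype.card V with hndef
  have hk0 : 0 < k := by
    obtain ⟨i, _⟩ := hmaxeq; exact i.pos
  have hn0 : 0 < n := by
    obtain ⟨i, _⟩ := hmaxeq
    obtain ⟨v, hv⟩ := hne i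
    exact Fintype.card_pos_iff.mpr ⟨v⟩
  have hnR : (0:ℝ) < (n:ℝ) := by exact_mod_cast hn0
  set τ : ℝ := min ((1 - α) * (n : ℝ) / 2) ((n:ℝ)/4) with hτdef
  have hτpos : 0 < τ := by
    apply lt_min
    · apply div_pos (mul_pos (by linarith) hnR) (by norm_num)
    · apply div_pos hnR (by norm_num)
  have hτle : τ ≤ (1 - α) * (n:ℝ) / 2 := min_le_left _ _
  -- direction predicate
  set T : Fin k → Finset V :=
    fun i => (Finset.univ.filter (fun j : Fin k => i < j)).biUnion X with hTdef
  obtain ⟨D, hDdef⟩ : ∃ D : Finset (Fin k), D = Finset.univ.filter (fun i =>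
      ((E.filter (fun e => e.1 ∈ X i ∧ e.2 ∈ T i)).card : ℝ) ≤ φ * ((X i).card : ℝ)) :=
    ⟨_, rfl⟩
  have hD : ∀ i : Fin k, i ∈ D ↔
      ((E.filter (fun e => e.1 ∈ X i ∧ e.2 ∈ T i)).card : ℝ) ≤ φ * ((X i).card : ℝ) := by
    intro i
    rw [hDdef, Finset.mem_filter]
    simp
  set C : Fin k → Finset (V × V) := fun i =>
    if i ∈ D then E.filter (fun e => e.1 ∈ X i ∧ e.2 ∈ T i)
    else E.filter (fun e => e.1 ∈ T i ∧ e.2 ∈ X i) with hCdef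
  have hC : ∀ i : Fin k, (i : ℕ) < k - 1 → ((C i).card : ℝ) ≤ φ * ((X i).card : ℝ) := by
    intro i hi
    by_cases h : i ∈ D
    · rw [hCdef]; simp only [if_pos h]; exact (hD i).mp h
    · rw [hCdef]; simp only [if_neg h]
      refine (hsparse i hi).resolve_left (fun hc => h ((hD i).mpr ?_))
      rw [hTdef]
      exact hc
  -- prefix sums
  set Sf : ℕ → ℝ := fun t =>
    ∑ i ∈ Finset.univ.filter (fun i : Fin k => (i:ℕ) < t ∧ i ∈ D), ((X i).card : ℝ)
    with hSfdef
  set Sb : ℕ → ℝ := fun t =>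
    ∑ i ∈ Finset.univ.filter (fun i : Fin k => (i:ℕ) < t ∧ i ∉ D), ((X i).card : ℝ)
    with hSbdef
  have hsplit : ∀ t : ℕ,
      Sf t + Sb t = ∑ i ∈ Finset.univ.filter (fun i : Fin k => (i:ℕ) < t), ((X i).card : ℝ) := by
    intro u
    rw [hSfdef, hSbdef]
    simp only []
    have h := Finset.sum_filter_add_sum_filter_not
      (Finset.univ.filter (fun i : Fin k => (i:ℕ) < u)) (fun i => i ∈ D)
      (fun i => ((X i).card : ℝ))
    rw [Finset.filter_filter, Finset.filter_filter] at h
    exact h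
  have hsum_total : ∑ i : Fin k, ((X i).card : ℝ) = (n:ℝ) := by
    have h1 : (Finset.univ.biUnion X).card = ∑ i, (X i).card :=
      Finset.card_biUnion (fun i _ j _ hij => hdisj i j hij)
    rw [hcover, Finset.card_univ] at h1
    exact_mod_cast h1.symm
  -- total of all-but-last
  have hlastlt : k - 1 < k := by omega
  have htail_big : (1 - α) * (n:ℝ) ≤ Sf (k-1) + Sb (k-1) := by
    rw [hsplit]
    have hfl : Finset.univ.filter (fun i : Fin k => ¬ ((i:ℕ) < k-1)) = {⟨k-1, hlastlt⟩} := by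
      ext i
      simp only [Finset.mem_filter, Finset.mem_univ, true_and, Finset.mem_singleton,
        Fin.ext_iff]
      have := i.isLt
      omega
    have h2 := Finset.sum_filter_add_sum_filter_not Finset.univ
      (fun i : Fin k => (i:ℕ) < k-1) (fun i => ((X i).card : ℝ))
    rw [hfl, Finset.sum_singleton] at h2
    have h3 := hmaxle ⟨k-1, hlastlt⟩
    rw [hsum_total] at h2
    linarith
  have hex : ∃ t : ℕ, t ≤ k - 1 ∧ (τ ≤ Sf t ∨ τ ≤ Sb t) := by
    refine ⟨k - 1, le_rfl, ?_⟩
    by_contra hcon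
    push_neg at hcon
    have := hτle
    nlinarith [hcon.1, hcon.2, htail_big]
  set t := Nat.find hex with htdef
  have ht := Nat.find_spec hex
  rw [← htdef] at ht
  have htk : t ≤ k - 1 := ht.1
  have ht1 : 1 ≤ t := by
    rcases Nat.eq_zero_or_pos t with h0 | h; swap; · exact h
    exfalso
    have this2 : τ ≤ Sf t ∨ τ ≤ Sb t := ht.2
    rw [h0] at this2
    have hf0 : Sf 0 = 0 := by
      rw [hSfdef]; simp
    have hb0 : Sb 0 = 0 := by
      rw [hSbdef]; simp
    rw [hf0, hb0] at this2
    rcases this2 with h | h <;> linarith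
  have hprev : ¬ (t - 1 ≤ k - 1 ∧ (τ ≤ Sf (t-1) ∨ τ ≤ Sb (t-1))) :=
    Nat.find_min hex (by omega)
  have hprevf : Sf (t-1) < τ ∧ Sb (t-1) < τ := by
    push_neg at hprev
    have := hprev (by omega)
    exact ⟨this.1, this.2⟩
  clear_value t
  have htlt : t - 1 < k := by omega
  have hstepf : Sf t ≤ Sf (t-1) + ((X ⟨t-1, htlt⟩).card : ℝ) := by
    rw [hSfdef]
    simp only []
    have hsub : Finset.univ.filter (fun i : Fin k => (i:ℕ) < t ∧ i ∈ D) ⊆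
        insert ⟨t-1, htlt⟩ (Finset.univ.filter (fun i : Fin k => (i:ℕ) < t - 1 ∧ i ∈ D)) := by
      intro i hi
      simp only [Finset.mem_filter, Finset.mem_univ, true_and] at hi
      simp only [Finset.mem_insert, Finset.mem_filter, Finset.mem_univ, true_and]
      rcases Nat.lt_or_ge (i:ℕ) (t-1) with h | h
      · exact Or.inr ⟨h, hi.2⟩
      · left; apply Fin.ext; simp; omega
    have hx : (⟨t-1, htlt⟩ : Fin k) ∉
        Finset.univ.filter (fun i : Fin k => (i:ℕ) < t - 1 ∧ i ∈ D) := by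
      simp
    refine le_trans (Finset.sum_le_sum_of_subset_of_nonneg hsub ?_) ?_
    · intro i _ _; positivity
    · rw [Finset.sum_insert hx]; linarith
  have hstepb : Sb t ≤ Sb (t-1) + ((X ⟨t-1, htlt⟩).card : ℝ) := by
    rw [hSbdef]
    simp only []
    have hsub : Finset.univ.filter (fun i : Fin k => (i:ℕ) < t ∧ i ∉ D) ⊆
        insert ⟨t-1, htlt⟩ (Finset.univ.filter (fun i : Fin k => (i:ℕ) < t - 1 ∧ i ∉ D)) := by
      intro i hi
      simp only [Finset.mem_filter, Finset.mem_univ, true_and] at hi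
      simp only [Finset.mem_insert, Finset.mem_filter, Finset.mem_univ, true_and]
      rcases Nat.lt_or_ge (i:ℕ) (t-1) with h | h
      · exact Or.inr ⟨h, hi.2⟩
      · left; apply Fin.ext; simp; omega
    have hx : (⟨t-1, htlt⟩ : Fin k) ∉
        Finset.univ.filter (fun i : Fin k => (i:ℕ) < t - 1 ∧ i ∉ D) := by
      simp
    refine le_trans (Finset.sum_le_sum_of_subset_of_nonneg hsub ?_) ?_
    · intro i _ _; positivity
    · rw [Finset.sum_insert hx]; linarith
  have hft : Sf t < τ + α * (n:ℝ) := by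
    have h2 := hmaxle ⟨t-1, htlt⟩
    linarith [hprevf.1]
  have hbt : Sb t < τ + α * (n:ℝ) := by
    have h2 := hmaxle ⟨t-1, htlt⟩
    linarith [hprevf.2]
  -- the cut
  obtain ⟨sA, hsAdef⟩ : ∃ s : Prop, s ↔ Sf t < τ := ⟨_, Iff.rfl⟩
  set IA : Finset (Fin k) :=
    Finset.univ.filter (fun i => ((i:ℕ) < t ∧ i ∈ D) ∨ (t ≤ (i:ℕ) ∧ sA)) with hIAdef
  set IB : Finset (Fin k) :=
    Finset.univ.filter (fun i => ((i:ℕ) < t ∧ i ∉ D) ∨ (t ≤ (i:ℕ) ∧ ¬ sA)) with hIBdef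
  set A : Finset V := IA.biUnion X with hAdef
  set B : Finset V := IB.biUnion X with hBdef
  have hInot : ∀ i : Fin k, ¬ (i ∈ IA ∧ i ∈ IB) := by
    rintro i ⟨hia, hib⟩
    rw [hIAdef, Finset.mem_filter] at hia
    rw [hIBdef, Finset.mem_filter] at hib
    rcases hia.2 with ⟨h1, h2⟩ | ⟨h1, h2⟩ <;> rcases hib.2 with ⟨h3, h4⟩ | ⟨h3, h4⟩ <;>
      first | exact h4 h2 | omega
  have hIall : ∀ i : Fin k, i ∈ IA ∨ i ∈ IB := by
    intro i
    rw [hIAdef, hIBdef, Finset.mem_filter, Finset.mem_filter]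
    by_cases h1 : (i:ℕ) < t
    · by_cases h2 : i ∈ D
      · exact Or.inl ⟨Finset.mem_univ _, Or.inl ⟨h1, h2⟩⟩
      · exact Or.inr ⟨Finset.mem_univ _, Or.inl ⟨h1, h2⟩⟩
    · by_cases h2 : sA
      · exact Or.inl ⟨Finset.mem_univ _, Or.inr ⟨by omega, h2⟩⟩
      · exact Or.inr ⟨Finset.mem_univ _, Or.inr ⟨by omega, h2⟩⟩
  have hABdisj : Disjoint A B := by
    rw [Finset.disjoint_left]
    intro v hvA hvB
    rw [hAdef, Finset.mem_biUnion] at hvA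
    rw [hBdef, Finset.mem_biUnion] at hvB
    obtain ⟨i, hiA, hvi⟩ := hvA
    obtain ⟨j, hjB, hvj⟩ := hvB
    by_cases hij : i = j
    · exact hInot i ⟨hiA, hij ▸ hjB⟩
    · exact Finset.disjoint_left.mp (hdisj i j hij) hvi hvj
  have hABunion : A ∪ B = Finset.univ := by
    apply Finset.eq_univ_of_forall
    intro v
    have hv : v ∈ Finset.univ.biUnion X := by rw [hcover]; exact Finset.mem_univ v
    rw [Finset.mem_biUnion] at hv
    obtain ⟨i, _, hvi⟩ := hv
    rcases hIall i with h | h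
    · exact Finset.mem_union_left _ (Finset.mem_biUnion.mpr ⟨i, h, hvi⟩)
    · exact Finset.mem_union_right _ (Finset.mem_biUnion.mpr ⟨i, h, hvi⟩)
  have hcardI : ∀ I : Finset (Fin k), ((I.biUnion X).card : ℝ) = ∑ i ∈ I, ((X i).card : ℝ) := by
    intro I
    rw [Finset.card_biUnion (fun i _ j _ hij => hdisj i j hij)]
    push_cast
    ring
  have hABn : (A.card : ℝ) + (B.card : ℝ) = (n:ℝ) := by
    have h1 : A.card + B.card = n := by
      rw [← Finset.card_union_of_disjoint hABdisj, hABunion, Finset.card_univ]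
    exact_mod_cast h1
  -- edge bound
  have hcutsub : E.filter (fun e => e.1 ∈ A ∧ e.2 ∈ B) ⊆
      (Finset.univ.filter (fun i : Fin k => (i:ℕ) < t)).biUnion C := by
    intro e he
    rw [Finset.mem_filter] at he
    obtain ⟨heE, heA, heB⟩ := he
    rw [hAdef, Finset.mem_biUnion] at heA
    rw [hBdef, Finset.mem_biUnion] at heB
    obtain ⟨i, hiA, hx1⟩ := heA
    obtain ⟨j, hjB, hx2⟩ := heB
    rw [hIAdef, Finset.mem_filter] at hiA
    rw [hIBdef, Finset.mem_filter] at hjB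
    replace hiA := hiA.2
    replace hjB := hjB.2
    rw [Finset.mem_biUnion]
    rcases lt_trichotomy (i:ℕ) (j:ℕ) with hij | hij | hij
    · have hit : (i:ℕ) < t := by
        rcases hiA with ⟨h1, _⟩ | ⟨h1, hs⟩
        · exact h1
        · rcases hjB with ⟨h2, _⟩ | ⟨h2, hs2⟩
          · omega
          · exact absurd hs hs2
      have hiD : i ∈ D := by
        rcases hiA with ⟨_, h⟩ | ⟨h1, _⟩
        · exact h
        · omega
      refine ⟨i, Finset.mem_filter.mpr ⟨Finset.mem_univ _, hit⟩, ?_⟩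
      rw [hCdef]
      simp only [if_pos hiD, Finset.mem_filter]
      refine ⟨heE, hx1, ?_⟩
      rw [hTdef]
      exact Finset.mem_biUnion.mpr
        ⟨j, Finset.mem_filter.mpr ⟨Finset.mem_univ _, Fin.lt_def.mpr hij⟩, hx2⟩
    · exfalso
      have hij' : i = j := Fin.ext hij
      subst hij'
      rcases hiA with ⟨h1, h2⟩ | ⟨h1, h2⟩ <;> rcases hjB with ⟨h3, h4⟩ | ⟨h3, h4⟩
      · exact h4 h2
      · omega
      · omega
      · exact h4 h2
    · have hjt : (j:ℕ) < t := by
        rcases hjB with ⟨h1, _⟩ | ⟨h1, hs⟩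
        · exact h1
        · rcases hiA with ⟨h2, _⟩ | ⟨h2, hs2⟩
          · omega
          · exact absurd hs2 hs
      have hjD : j ∉ D := by
        rcases hjB with ⟨_, h⟩ | ⟨h1, _⟩
        · exact h
        · omega
      refine ⟨j, Finset.mem_filter.mpr ⟨Finset.mem_univ _, hjt⟩, ?_⟩
      rw [hCdef]
      simp only [if_neg hjD, Finset.mem_filter]
      refine ⟨heE, ?_, hx2⟩
      rw [hTdef]
      exact Finset.mem_biUnion.mpr
        ⟨i, Finset.mem_filter.mpr ⟨Finset.mem_univ _, Fin.lt_def.mpr hij⟩, hx1⟩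
  have hedge : ((E.filter (fun e => e.1 ∈ A ∧ e.2 ∈ B)).card : ℝ) ≤
      φ * ∑ i ∈ Finset.univ.filter (fun i : Fin k => (i : ℕ) < k - 1), ((X i).card : ℝ) := by
    have c1 : ((E.filter (fun e => e.1 ∈ A ∧ e.2 ∈ B)).card : ℝ) ≤
        (((Finset.univ.filter (fun i : Fin k => (i:ℕ) < t)).biUnion C).card : ℝ) := by
      exact_mod_cast Finset.card_le_card hcutsub
    have c2 : (((Finset.univ.filter (fun i : Fin k => (i:ℕ) < t)).biUnion C).card : ℝ) ≤
        ∑ i ∈ Finset.univ.filter (fun i : Fin k => (i:ℕ) < t), ((C i).card : ℝ) := by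
      exact_mod_cast Finset.card_biUnion_le
    have c3 : ∑ i ∈ Finset.univ.filter (fun i : Fin k => (i:ℕ) < t), ((C i).card : ℝ) ≤
        ∑ i ∈ Finset.univ.filter (fun i : Fin k => (i:ℕ) < t), φ * ((X i).card : ℝ) := by
      apply Finset.sum_le_sum
      intro i hi
      have h := (Finset.mem_filter.mp hi).2
      exact hC i (by omega)
    have c4 : ∑ i ∈ Finset.univ.filter (fun i : Fin k => (i:ℕ) < t), φ * ((X i).card : ℝ) =
        φ * ∑ i ∈ Finset.univ.filter (fun i : Fin k => (i:ℕ) < t), ((X i).card : ℝ) := by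
      rw [Finset.mul_sum]
    have c5 : ∑ i ∈ Finset.univ.filter (fun i : Fin k => (i:ℕ) < t), ((X i).card : ℝ) ≤
        ∑ i ∈ Finset.univ.filter (fun i : Fin k => (i:ℕ) < k - 1), ((X i).card : ℝ) := by
      apply Finset.sum_le_sum_of_subset_of_nonneg
      · intro i hi
        rw [Finset.mem_filter] at hi ⊢
        exact ⟨hi.1, by omega⟩
      · intro i _ _
        positivity
    have c6 : φ * ∑ i ∈ Finset.univ.filter (fun i : Fin k => (i:ℕ) < t), ((X i).card : ℝ) ≤
        φ * ∑ i ∈ Finset.univ.filter (fun i : Fin k => (i:ℕ) < k - 1), ((X i).card : ℝ) :=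
      mul_le_mul_of_nonneg_left c5 hφ0.le
    linarith
  -- sizes
  have hsizes : τ ≤ (A.card : ℝ) ∧ τ ≤ (B.card : ℝ) := by
    by_cases hcase : τ ≤ Sf t
    · have hsA : ¬ sA := fun h => absurd (hsAdef.mp h) (not_lt.mpr hcase)
      have hIAeq : IA = Finset.univ.filter (fun i : Fin k => (i:ℕ) < t ∧ i ∈ D) := by
        rw [hIAdef]
        apply Finset.filter_congr
        intro i _
        constructor
        · rintro (h | ⟨_, h⟩)
          · exact h
          · exact absurd h hsA
        · exact Or.inl
      have hAcard : (A.card : ℝ) = Sf t := by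
        rw [hAdef, hcardI, hIAeq, hSfdef]
      constructor
      · rw [hAcard]; exact hcase
      · rw [hAcard] at hABn
        linarith [hft, hτle]
    · have hsA : sA := by rw [hsAdef]; exact not_le.mp hcase
      have hSbt : τ ≤ Sb t := (ht.2).resolve_left hcase
      have hIBeq : IB = Finset.univ.filter (fun i : Fin k => (i:ℕ) < t ∧ i ∉ D) := by
        rw [hIBdef]
        apply Finset.filter_congr
        intro i _
        constructor
        · rintro (h | ⟨_, h⟩)
          · exact h
          · exact absurd hsA h
        · exact Or.inl
      have hBcard : (B.card : ℝ) = Sb t := by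
        rw [hBdef, hcardI, hIBeq, hSbdef]
      constructor
      · rw [hBcard] at hABn
        linarith [hbt, hτle]
      · rw [hBcard]; exact hSbt
  have hAne : A.Nonempty :=
    Finset.card_pos.mp (by exact_mod_cast hτpos.trans_le hsizes.1)
  have hBne : B.Nonempty :=
    Finset.card_pos.mp (by exact_mod_cast hτpos.trans_le hsizes.2)
  exact ⟨A, B, hAne, hBne, hABdisj, hABunion, hsizes.1, hsizes.2, hedge⟩
end

section
/- Let H = (L, R, E) be a simple directed bipartite graph with no isolated vertices, such that every vertex in R has out-degree at most 1 and every vertex in L has in-degree at most 1. Given a cut (A,B) in H of sparsity at most φ ≤ 1/4, there exists a well-structured cut (A',B') in H of sparsity at most 2φ, with A' ⊆ A and |A'| ≥ (1-φ)|A|. -/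
open scoped Classical

/-- Let `H = (L, R, E)` be a simple directed bipartite graph with no isolated vertices,
such that every vertex in `R` has out-degree at most 1 and every vertex in `L` has
in-degree at most 1 (edges from `R` to `L` are special, edges from `L` to `R` regular).
Given a cut `(A,B)` in `H` of sparsity at most `φ ≤ 1/4`, there exists a
well-structured cut `(A',B')` in `H` (all edges of `E_H(A',B')` are special) of
sparsity at most `2φ`, with `A' ⊆ A` and `|A'| ≥ (1-φ)|A|`. -/
theorem stmt4 {V : Type*} [Fintype V] [DecidableEq V] (L R : Finset V)
    (E : Finset (V × V)) (φ : ℝ) (A B : Finset V)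
    (hLR : Disjoint L R) (hLRcover : L ∪ R = Finset.univ)
    (hbip : ∀ e ∈ E, (e.1 ∈ L ∧ e.2 ∈ R) ∨ (e.1 ∈ R ∧ e.2 ∈ L))
    (hnoiso : ∀ v : V, ∃ e ∈ E, e.1 = v ∨ e.2 = v)
    (houtR : ∀ v ∈ R, (E.filter (fun e => e.1 = v)).card ≤ 1)
    (hinL : ∀ v ∈ L, (E.filter (fun e => e.2 = v)).card ≤ 1)
    (hφ : φ ≤ 1 / 4)
    (hA : A.Nonempty) (hB : B.Nonempty) (hABdisj : Disjoint A B)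
    (hABcover : A ∪ B = Finset.univ)
    (hsparsity : ((E.filter (fun e => e.1 ∈ A ∧ e.2 ∈ B)).card : ℝ) ≤
      φ * min (A.card : ℝ) (B.card : ℝ)) :
    ∃ A' B' : Finset V, A'.Nonempty ∧ B'.Nonempty ∧ Disjoint A' B' ∧
      A' ∪ B' = Finset.univ ∧ A' ⊆ A ∧
      (1 - φ) * (A.card : ℝ) ≤ (A'.card : ℝ) ∧
      (∀ e ∈ E, e.1 ∈ A' → e.2 ∈ B' → e.1 ∈ R ∧ e.2 ∈ L) ∧
      ((E.filter (fun e => e.1 ∈ A' ∧ e.2 ∈ B')).card : ℝ) ≤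
        2 * φ * min (A'.card : ℝ) (B'.card : ℝ) := by
  classical
  -- X : L-endpoints of regular crossing edges
  set Ereg : Finset (V × V) := E.filter (fun e => e.1 ∈ A ∧ e.2 ∈ B ∧ e.1 ∈ L) with hEreg
  set Espec : Finset (V × V) := E.filter (fun e => e.1 ∈ A ∧ e.2 ∈ B ∧ e.1 ∈ R) with hEspec
  set Ecross : Finset (V × V) := E.filter (fun e => e.1 ∈ A ∧ e.2 ∈ B) with hEcross
  set X : Finset V := Ereg.image Prod.fst with hXdef
  have hXA : X ⊆ A := by
    intro v hv
    simp only [hXdef, hEreg, Finset.mem_image, Finset.mem_filter] at hv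
    obtain ⟨e, ⟨_, h1, _, _⟩, rfl⟩ := hv
    exact h1
  have hXL : X ⊆ L := by
    intro v hv
    simp only [hXdef, hEreg, Finset.mem_image, Finset.mem_filter] at hv
    obtain ⟨e, ⟨_, _, _, h3⟩, rfl⟩ := hv
    exact h3
  -- all crossing edges of the new cut are special
  have hspec : ∀ e ∈ E, e.1 ∈ A \ X → e.2 ∈ B ∪ X → e.1 ∈ R ∧ e.2 ∈ L := by
    intro e he h1 h2
    rcases hbip e he with ⟨heL, heR⟩ | h
    · exfalso
      rw [Finset.mem_union] at h2
      rw [Finset.mem_sdiff] at h1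
      have h2B : e.2 ∈ B := by
        rcases h2 with h | h
        · exact h
        · exact absurd (hXL h) (Finset.disjoint_right.mp hLR heR)
      apply h1.2
      simp only [hXdef, hEreg, Finset.mem_image, Finset.mem_filter]
      exact ⟨e, ⟨he, h1.1, h2B, heL⟩, rfl⟩
    · exact h
  -- special + regular crossing edges don't overcount
  have hdisjSR : Disjoint Espec Ereg := by
    rw [Finset.disjoint_left]
    intro e h1 h2
    simp only [hEspec, hEreg, Finset.mem_filter] at h1 h2
    exact Finset.disjoint_right.mp hLR h1.2.2.2 h2.2.2.2
  have hsum : Espec.card + Ereg.card ≤ Ecross.card := by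
    rw [← Finset.card_union_of_disjoint hdisjSR]
    apply Finset.card_le_card
    intro e he
    rcases Finset.mem_union.mp he with h | h <;>
      simp only [hEspec, hEreg, Finset.mem_filter] at h <;>
      simp only [hEcross, Finset.mem_filter] <;>
      exact ⟨h.1, h.2.1, h.2.2.1⟩
  -- edges into X are at most |X|
  set T : Finset (V × V) := E.filter (fun e => e.2 ∈ X) with hT
  have hTX : T.card ≤ X.card := by
    apply Finset.card_le_card_of_injOn (fun e => e.2)
    · intro e he
      simp only [hT, Finset.mem_filter] at he
      exact (Finset.mem_filter.mp he).2
    · intro e he e' he' hee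
      simp only [Finset.coe_filter, Set.mem_setOf_eq, hT] at he he'
      have hw : e.2 ∈ L := hXL he.2
      have hcard := hinL e.2 hw
      have h1 : e ∈ E.filter (fun x => x.2 = e.2) :=
        Finset.mem_filter.mpr ⟨he.1, rfl⟩
      have h2 : e' ∈ E.filter (fun x => x.2 = e.2) :=
        Finset.mem_filter.mpr ⟨he'.1, hee.symm⟩
      exact Finset.card_le_one.mp hcard e h1 e' h2
  -- new crossing edges are among special old ones and edges into X
  have hsub : E.filter (fun e => e.1 ∈ A \ X ∧ e.2 ∈ B ∪ X) ⊆ Espec ∪ T := by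
    intro e he
    simp only [Finset.mem_filter] at he
    obtain ⟨heE, h1, h2⟩ := he
    by_cases hx : e.2 ∈ X
    · exact Finset.mem_union_right _ (by simp only [hT, Finset.mem_filter]; exact ⟨heE, hx⟩)
    · have h2B : e.2 ∈ B := by
        rcases Finset.mem_union.mp h2 with h | h
        · exact h
        · exact absurd h hx
      have hR := (hspec e heE h1 h2).1
      apply Finset.mem_union_left
      simp only [hEspec, Finset.mem_filter]
      exact ⟨heE, (Finset.mem_sdiff.mp h1).1, h2B, hR⟩
  have hXcard : X.card ≤ Ereg.card := Finset.card_image_le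
  -- numeric facts
  have hA1 : (1 : ℝ) ≤ (A.card : ℝ) := by exact_mod_cast hA.card_pos
  have hB1 : (1 : ℝ) ≤ (B.card : ℝ) := by exact_mod_cast hB.card_pos
  have hmin1 : (1 : ℝ) ≤ min (A.card : ℝ) (B.card : ℝ) := le_min hA1 hB1
  have hcross0 : (0 : ℝ) ≤ (Ecross.card : ℝ) := by positivity
  have hφ0 : 0 ≤ φ := by nlinarith
  have hXφ : (X.card : ℝ) ≤ φ * (A.card : ℝ) := by
    have h1 : (X.card : ℝ) ≤ (Ecross.card : ℝ) := by
      exact_mod_cast le_trans hXcard (le_trans (Nat.le_add_left _ _) hsum)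
    have h2 : min (A.card : ℝ) (B.card : ℝ) ≤ (A.card : ℝ) := min_le_left _ _
    nlinarith
  have hA'card : (((A \ X).card : ℝ)) = (A.card : ℝ) - (X.card : ℝ) := by
    rw [Finset.card_sdiff_of_subset hXA]
    exact_mod_cast Nat.cast_sub (Finset.card_le_card hXA)
  have hA'lb : (1 - φ) * (A.card : ℝ) ≤ ((A \ X).card : ℝ) := by
    rw [hA'card]; nlinarith
  have hA'pos : (0 : ℝ) < ((A \ X).card : ℝ) := by nlinarith
  have hA'ne : (A \ X).Nonempty := by
    rw [← Finset.card_pos]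
    exact_mod_cast hA'pos
  have hB'ne : (B ∪ X).Nonempty := by
    obtain ⟨b, hb⟩ := hB
    exact ⟨b, Finset.mem_union_left _ hb⟩
  refine ⟨A \ X, B ∪ X, hA'ne, hB'ne, ?_, ?_, Finset.sdiff_subset, hA'lb, hspec, ?_⟩
  · exact Finset.disjoint_union_right.mpr
      ⟨Finset.disjoint_of_subset_left Finset.sdiff_subset hABdisj, Finset.sdiff_disjoint⟩
  · apply Finset.eq_univ_iff_forall.mpr
    intro v
    have hv : v ∈ A ∪ B := by rw [hABcover]; exact Finset.mem_univ v
    simp only [Finset.mem_union, Finset.mem_sdiff]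
    by_cases hx : v ∈ X
    · tauto
    · rcases Finset.mem_union.mp hv with h | h <;> tauto
  · -- sparsity bound
    have h1 : ((E.filter (fun e => e.1 ∈ A \ X ∧ e.2 ∈ B ∪ X)).card : ℝ) ≤ (Ecross.card : ℝ) := by
      have := le_trans (Finset.card_le_card hsub)
        (le_trans (Finset.card_union_le _ _)
          (le_trans (add_le_add_right (le_trans hTX hXcard) _) hsum))
      exact_mod_cast this
    have hB'card : (B.card : ℝ) ≤ ((B ∪ X).card : ℝ) := by
      exact_mod_cast Finset.card_le_card Finset.subset_union_left
    have hminle : min (A.card : ℝ) (B.card : ℝ) ≤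
        2 * min (((A \ X).card : ℝ)) (((B ∪ X).card : ℝ)) := by
      have hma := min_le_left (A.card : ℝ) (B.card : ℝ)
      have hmb := min_le_right (A.card : ℝ) (B.card : ℝ)
      rcases min_cases (((A \ X).card : ℝ)) (((B ∪ X).card : ℝ)) with ⟨h, _⟩ | ⟨h, _⟩ <;>
        rw [h] <;> nlinarith
    have h2 : ((E.filter (fun e => e.1 ∈ A \ X ∧ e.2 ∈ B ∪ X)).card : ℝ) ≤
        φ * min (A.card : ℝ) (B.card : ℝ) := le_trans h1 hsparsity
    calc ((E.filter (fun e => e.1 ∈ A \ X ∧ e.2 ∈ B ∪ X)).card : ℝ)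
        ≤ φ * (2 * min (((A \ X).card : ℝ)) (((B ∪ X).card : ℝ))) :=
          le_trans h2 (mul_le_mul_of_nonneg_left hminle hφ0)
      _ = 2 * φ * min (((A \ X).card : ℝ)) (((B ∪ X).card : ℝ)) := by ring
end

section
/- Let H be a directed graph with s, t, and a collection P' of k simple s-t paths, each of total length at most 1/(32 log m), such that the paths in P' cause edge-congestion at most log m. Then the subgraph H* consisting of the union of the edges of paths in P' contains a collection of at least k/(2 log m) edge-disjoint s-t paths, each of total length at most 1/8, where edge lengths in H* equal those in H. -/
set_option linter.unusedSectionVars false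
set_option maxHeartbeats 1600000

open scoped Classical

/-- The list of (directed) edges traversed by a walk given by its list of vertices. -/
def pathEdges {V : Type*} (p : List V) : List (V × V) := p.zip p.tail

/-- `p` is a simple directed path from `s` to `t` in the graph with edge set `E`. -/
def IsPath {V : Type*} (E : Finset (V × V)) (s t : V) (p : List V) : Prop :=
  p.Chain' (fun a b => (a, b) ∈ E) ∧ p.head? = some s ∧ p.getLast? = some t ∧ p.Nodup

namespace Stmt7
variable {V : Type*} [DecidableEq V]

lemma pathEdges_nil : pathEdges ([] : List V) = [] := rfl
lemma pathEdges_single (a : V) : pathEdges [a] = [] := rfl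
lemma pathEdges_cons₂ (a b : V) (l : List V) :
    pathEdges (a :: b :: l) = (a, b) :: pathEdges (b :: l) := rfl

lemma chain'_iff_pathEdges {r : V → V → Prop} :
    ∀ {p : List V}, List.Chain' r p ↔ ∀ e ∈ pathEdges p, r e.1 e.2
  | [] => by simp [pathEdges_nil, List.Chain']
  | [a] => by simp [pathEdges_single, List.Chain']
  | a :: b :: l => by
      rw [List.Chain', List.isChain_cons_cons, pathEdges_cons₂, ← List.Chain', chain'_iff_pathEdges (p := b :: l)]
      simp

lemma mem_pathEdges : ∀ {p : List V} {e : V × V}, e ∈ pathEdges p → e.1 ∈ p ∧ e.2 ∈ p.tail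
  | [], _, h => by simp [pathEdges_nil] at h
  | [a], _, h => by simp [pathEdges_single] at h
  | a :: b :: l, e, h => by
      rw [pathEdges_cons₂] at h
      rcases List.mem_cons.1 h with h | h
      · subst h; simp
      · have := mem_pathEdges h
        simp only [List.tail_cons] at this ⊢
        exact ⟨List.mem_cons_of_mem _ this.1, List.mem_cons_of_mem _ this.2⟩

lemma pathEdges_nodup : ∀ {p : List V}, p.Nodup → (pathEdges p).Nodup
  | [], _ => by simp [pathEdges_nil]
  | [a], _ => by simp [pathEdges_single]
  | a :: b :: l, h => by
      rw [pathEdges_cons₂]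
      refine List.nodup_cons.2 ⟨?_, pathEdges_nodup h.of_cons⟩
      intro hmem
      exact (List.nodup_cons.1 h).1 (mem_pathEdges hmem).1

/-- shortcut a walk to a nodup path -/
lemma exists_nodup_path_of_chain' {r : V → V → Prop} :
    ∀ (n : ℕ) (p : List V), p.length ≤ n → p.Chain' r →
    ∀ s t : V, p.head? = some s → p.getLast? = some t →
    ∃ q : List V, q.Chain' r ∧ q.head? = some s ∧ q.getLast? = some t ∧ q.Nodup := by
  intro n
  induction n with
  | zero => intro p hle _ s t hh _; interval_cases hl : p.length <;> simp_all
  | succ n ih =>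
    intro p hle hc s t hh hl
    by_cases hnd : p.Nodup
    · exact ⟨p, hc, hh, hl, hnd⟩
    · obtain ⟨x, hdup⟩ := List.exists_duplicate_iff_not_nodup.2 hnd
      have hsub := List.duplicate_iff_sublist.1 hdup
      -- decompose p = l1 ++ x :: (l2 ++ x :: l3)
      obtain ⟨l1, l2, l3, hp⟩ : ∃ l1 l2 l3, p = l1 ++ x :: (l2 ++ x :: l3) := by
        clear hh hl hc hle hnd hdup
        induction p with
        | nil => simp at hsub
        | cons a p' ihp =>
          cases hsub with
          | cons _ h =>
            obtain ⟨l1, l2, l3, hp⟩ := ihp h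
            exact ⟨a :: l1, l2, l3, by rw [hp]; rfl⟩
          | cons_cons _ h =>
            have hx : x ∈ p' := List.singleton_sublist.1 h
            obtain ⟨u, v, huv⟩ := List.append_of_mem hx
            exact ⟨[], u, v, by rw [huv]; rfl⟩
      subst hp
      set q := l1 ++ x :: l3 with hq
      have hclen : q.length ≤ n := by
        have : q.length < (l1 ++ x :: (l2 ++ x :: l3)).length := by
          simp [hq]
        omega
      have hcq : q.Chain' r := by
        rw [List.Chain', List.isChain_append] at hc ⊢
        refine ⟨hc.1, ?_, ?_⟩
        · have h2 := hc.2.1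
          have : (x :: l2) ++ (x :: l3) = x :: (l2 ++ x :: l3) := by simp
          rw [← this, List.isChain_append] at h2
          exact h2.2.1
        · intro a ha y hy
          exact hc.2.2 a ha y (by simpa using hy)
      have hhq : q.head? = some s := by
        rw [List.head?_append] at hh ⊢
        simpa using hh
      have hlq : q.getLast? = some t := by
        rw [hq, List.getLast?_append]
        rw [List.getLast?_append] at hl
        have : (x :: (l2 ++ x :: l3)).getLast? = (x :: l3).getLast? := by
          have h1 : x :: (l2 ++ x :: l3) = (x :: l2) ++ (x :: l3) := by simp
          rw [h1, List.getLast?_append]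
          cases h2 : (x :: l3).getLast? with
          | none => simp at h2
          | some a => simp
        rw [this] at hl
        exact hl
      exact ih q hclen hcq s t hhq hlq

lemma exists_nodup_path {r : V → V → Prop} {s t : V} (h : Relation.ReflTransGen r s t) :
    ∃ p : List V, p.Chain' r ∧ p.head? = some s ∧ p.getLast? = some t ∧ p.Nodup := by
  have hwalk : ∃ p : List V, p.Chain' r ∧ p.head? = some s ∧ p.getLast? = some t := by
    induction h with
    | refl => exact ⟨[s], List.isChain_singleton _, rfl, rfl⟩
    | @tail b c hsb hbc ih =>
      obtain ⟨p, hc, hh, hl⟩ := ih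
      refine ⟨p ++ [c], ?_, ?_, by simp⟩
      · rw [List.Chain', List.isChain_append]
        refine ⟨hc, by simp, ?_⟩
        intro a ha y hy
        simp only [List.head?_cons, Option.mem_def, Option.some.injEq] at hy
        subst hy
        rw [hl] at ha
        simp only [Option.mem_def, Option.some.injEq] at ha
        subst ha
        exact hbc
      · rw [List.head?_append, hh]; rfl
  obtain ⟨p, hc, hh, hl⟩ := hwalk
  exact exists_nodup_path_of_chain' p.length p le_rfl hc s t hh hl

def indeg (S : Finset (V × V)) (v : V) : ℕ := (S.filter (fun e => e.2 = v)).card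
def outdeg (S : Finset (V × V)) (v : V) : ℕ := (S.filter (fun e => e.1 = v)).card
def exc (S : Finset (V × V)) (v : V) : ℤ := (indeg S v : ℤ) - (outdeg S v : ℤ)

lemma exc_sdiff {S T : Finset (V × V)} (h : T ⊆ S) (v : V) :
    exc (S \ T) v = exc S v - exc T v := by
  have h1 : (S \ T).filter (fun e => e.2 = v) = S.filter (fun e => e.2 = v) \ T.filter (fun e => e.2 = v) := by
    ext e; simp [Finset.mem_sdiff, Finset.mem_filter]; tauto
  have h2 : (S \ T).filter (fun e => e.1 = v) = S.filter (fun e => e.1 = v) \ T.filter (fun e => e.1 = v) := by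
    ext e; simp [Finset.mem_sdiff, Finset.mem_filter]; tauto
  have hs1 : T.filter (fun e => e.2 = v) ⊆ S.filter (fun e => e.2 = v) :=
    Finset.filter_subset_filter _ h
  have hs2 : T.filter (fun e => e.1 = v) ⊆ S.filter (fun e => e.1 = v) :=
    Finset.filter_subset_filter _ h
  unfold exc indeg outdeg
  rw [h1, h2, Finset.card_sdiff_of_subset hs1, Finset.card_sdiff_of_subset hs2]
  have := Finset.card_le_card hs1
  have := Finset.card_le_card hs2
  push_cast [Nat.cast_sub (Finset.card_le_card hs1), Nat.cast_sub (Finset.card_le_card hs2)]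
  ring

lemma exc_union {S T : Finset (V × V)} (h : Disjoint S T) (v : V) :
    exc (S ∪ T) v = exc S v + exc T v := by
  unfold exc indeg outdeg
  rw [Finset.filter_union, Finset.filter_union,
    Finset.card_union_of_disjoint (h.mono (Finset.filter_subset _ _) (Finset.filter_subset _ _)),
    Finset.card_union_of_disjoint (h.mono (Finset.filter_subset _ _) (Finset.filter_subset _ _))]
  push_cast
  ring

lemma exc_swap (S : Finset (V × V)) (v : V) :
    exc (S.image Prod.swap) v = - exc S v := by
  have hinj : Function.Injective (Prod.swap : V × V → V × V) := Prod.swap_injective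
  have h1 : (S.image Prod.swap).filter (fun e => e.2 = v) =
      (S.filter (fun e => e.1 = v)).image Prod.swap := by
    ext e
    simp only [Finset.mem_filter, Finset.mem_image]
    constructor
    · rintro ⟨⟨a, ha, rfl⟩, hv⟩; exact ⟨a, ⟨ha, hv⟩, rfl⟩
    · rintro ⟨a, ⟨ha, hv⟩, rfl⟩; exact ⟨⟨a, ha, rfl⟩, hv⟩
  have h2 : (S.image Prod.swap).filter (fun e => e.1 = v) =
      (S.filter (fun e => e.2 = v)).image Prod.swap := by
    ext e
    simp only [Finset.mem_filter, Finset.mem_image]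
    constructor
    · rintro ⟨⟨a, ha, rfl⟩, hv⟩; exact ⟨a, ⟨ha, hv⟩, rfl⟩
    · rintro ⟨a, ⟨ha, hv⟩, rfl⟩; exact ⟨⟨a, ha, rfl⟩, hv⟩
  unfold exc indeg outdeg
  rw [h1, h2, Finset.card_image_of_injective _ hinj, Finset.card_image_of_injective _ hinj]
  ring

/-- card of edges of a nodup path entering `v` -/
lemma card_filter_snd_pathEdges : ∀ {q : List V}, q.Nodup → ∀ v : V,
    ((pathEdges q).toFinset.filter (fun e => e.2 = v)).card = if v ∈ q.tail then 1 else 0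
  | [], _, v => by simp [pathEdges_nil]
  | [a], _, v => by simp [pathEdges_single]
  | a :: b :: l, h, v => by
      rw [pathEdges_cons₂]
      have hnd : (pathEdges (b :: l)).toFinset.filter (fun e => e.2 = v) ⊆ (pathEdges (b :: l)).toFinset := Finset.filter_subset _ _
      have hab : (a, b) ∉ (pathEdges (b :: l)).toFinset := by
        intro hmem
        rw [List.mem_toFinset] at hmem
        exact (List.nodup_cons.1 h).1 (mem_pathEdges hmem).1
      have ih := card_filter_snd_pathEdges (q := b :: l) h.of_cons v
      rw [List.toFinset_cons, Finset.filter_insert]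
      by_cases hbv : b = v
      · subst hbv
        rw [if_pos rfl, Finset.card_insert_of_notMem (fun hm => hab (hnd hm)), ih]
        have : b ∉ l := (List.nodup_cons.1 h.of_cons).1
        simp only [List.tail_cons]
        simp [this]
      · rw [if_neg (by simpa using hbv), ih]
        simp only [List.tail_cons]
        by_cases hvl : v ∈ l
        · simp [hvl]
        · have hnot : v ∉ b :: l := by
            simp only [List.mem_cons]
            rintro (rfl | hmem)
            · exact hbv rfl
            · exact hvl hmem
          simp [hvl, hnot]

lemma card_filter_fst_pathEdges : ∀ {q : List V}, q.Nodup → ∀ v : V,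
    ((pathEdges q).toFinset.filter (fun e => e.1 = v)).card = if v ∈ q.dropLast then 1 else 0
  | [], _, v => by simp [pathEdges_nil]
  | [a], _, v => by simp [pathEdges_single]
  | a :: b :: l, h, v => by
      rw [pathEdges_cons₂]
      have hab : (a, b) ∉ (pathEdges (b :: l)).toFinset := by
        intro hmem
        rw [List.mem_toFinset] at hmem
        exact (List.nodup_cons.1 h).1 (mem_pathEdges hmem).1
      have ih := card_filter_fst_pathEdges (q := b :: l) h.of_cons v
      rw [List.toFinset_cons, Finset.filter_insert]
      have hdl : (a :: b :: l).dropLast = a :: (b :: l).dropLast := by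
        simp [List.dropLast_cons₂]
      rw [hdl]
      by_cases hav : a = v
      · subst hav
        have hnotin : a ∉ (b :: l).dropLast := by
          intro hmem
          exact (List.nodup_cons.1 h).1 (List.dropLast_subset _ hmem)
        rw [if_pos rfl, Finset.card_insert_of_notMem
          (fun hm => hab (Finset.filter_subset _ _ hm)), ih, if_neg hnotin,
          if_pos List.mem_cons_self]
      · rw [if_neg (by simpa using hav), ih]
        by_cases hvl : v ∈ (b :: l).dropLast
        · rw [if_pos hvl, if_pos (List.mem_cons_of_mem _ hvl)]
        · have hnot : v ∉ a :: (b :: l).dropLast := by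
            simp only [List.mem_cons]
            rintro (rfl | hmem)
            · exact hav rfl
            · exact hvl hmem
          rw [if_neg hvl, if_neg hnot]

lemma exc_pathEdges {q : List V} {s t : V} (hnd : q.Nodup)
    (hh : q.head? = some s) (hl : q.getLast? = some t) (hst : s ≠ t) (v : V) :
    exc (pathEdges q).toFinset v = (if v = t then 1 else 0) - (if v = s then 1 else 0) := by
  obtain ⟨mid, rfl⟩ : ∃ mid : List V, q = s :: (mid ++ [t]) := by
    cases q with
    | nil => simp at hh
    | cons a q' =>
      have ha : a = s := by simpa using hh
      subst ha
      cases q' with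
      | nil => exact absurd (by simpa using hl) hst
      | cons b q'' =>
        have hl' : (b :: q'').getLast? = some t := by
          rwa [List.getLast?_cons_cons] at hl
        have hne : (b :: q'' : List V) ≠ [] := by simp
        have hlast : (b :: q'').getLast hne = t := by
          rw [List.getLast?_eq_getLast hne] at hl'
          simpa using hl'
        exact ⟨(b :: q'').dropLast, by rw [← hlast, List.dropLast_append_getLast hne]⟩
  have hin := card_filter_snd_pathEdges hnd v
  have hout := card_filter_fst_pathEdges hnd v
  have htail : (s :: (mid ++ [t])).tail = mid ++ [t] := rfl
  have hdrop : (s :: (mid ++ [t])).dropLast = s :: mid := by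
    rw [show s :: (mid ++ [t]) = (s :: mid) ++ [t] by simp, List.dropLast_concat]
  have h1 := List.nodup_cons.1 hnd
  have hsmid : s ∉ mid := fun h => h1.1 (by simp [h])
  have htmid : t ∉ mid := by
    have := h1.2
    simp only [List.nodup_append, List.nodup_singleton, List.disjoint_singleton] at this
    tauto
  unfold exc indeg outdeg
  rw [hin, hout, htail, hdrop]
  by_cases hvt : v = t
  · subst hvt
    have hts : v ≠ s := fun h => hst h.symm
    simp [htmid, hts]
  · by_cases hvs : v = s
    · subst hvs
      simp [hsmid, hst]
    · by_cases hvm : v ∈ mid <;> simp [hvm, hvt, hvs]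

/-- sum of excesses over a vertex set -/
lemma sum_exc (S : Finset (V × V)) (R : Finset V) :
    ∑ v ∈ R, exc S v =
      ((S.filter (fun e => e.2 ∈ R)).card : ℤ) - ((S.filter (fun e => e.1 ∈ R)).card : ℤ) := by
  have hin : S.filter (fun e => e.2 ∈ R) = R.biUnion (fun v => S.filter (fun e => e.2 = v)) := by
    ext e
    simp only [Finset.mem_filter, Finset.mem_biUnion]
    constructor
    · rintro ⟨he, hv⟩; exact ⟨e.2, hv, he, rfl⟩
    · rintro ⟨v, hv, he, rfl⟩; exact ⟨he, hv⟩
  have hout : S.filter (fun e => e.1 ∈ R) = R.biUnion (fun v => S.filter (fun e => e.1 = v)) := by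
    ext e
    simp only [Finset.mem_filter, Finset.mem_biUnion]
    constructor
    · rintro ⟨he, hv⟩; exact ⟨e.1, hv, he, rfl⟩
    · rintro ⟨v, hv, he, rfl⟩; exact ⟨he, hv⟩
  have hdisj1 : ∀ x ∈ R, ∀ y ∈ R, x ≠ y →
      Disjoint (S.filter (fun e => e.2 = x)) (S.filter (fun e => e.2 = y)) := by
    intro x _ y _ hxy
    refine Finset.disjoint_left.2 ?_
    intro e he1 he2
    simp only [Finset.mem_filter] at he1 he2
    exact hxy (he1.2 ▸ he2.2 ▸ rfl)
  have hdisj2 : ∀ x ∈ R, ∀ y ∈ R, x ≠ y →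
      Disjoint (S.filter (fun e => e.1 = x)) (S.filter (fun e => e.1 = y)) := by
    intro x _ y _ hxy
    refine Finset.disjoint_left.2 ?_
    intro e he1 he2
    simp only [Finset.mem_filter] at he1 he2
    exact hxy (he1.2 ▸ he2.2 ▸ rfl)
  rw [hin, hout, Finset.card_biUnion hdisj1, Finset.card_biUnion hdisj2]
  unfold exc indeg outdeg
  push_cast
  rw [Finset.sum_sub_distrib]

/-- A cut: every s-t path in F contains an edge of C. -/
def IsCut (F : Finset (V × V)) (s t : V) (C : Finset (V × V)) : Prop :=
  ∀ p : List V, p.Chain' (fun a b => (a, b) ∈ F) → p.head? = some s →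
    p.getLast? = some t → ∃ e ∈ pathEdges p, e ∈ C

lemma exists_crossing {Pr : V → Prop} :
    ∀ {p : List V} {a b : V}, p.head? = some a → Pr a → p.getLast? = some b → ¬ Pr b →
      ∃ e ∈ pathEdges p, Pr e.1 ∧ ¬ Pr e.2
  | [], a, b, hh, _, _, _ => by simp at hh
  | [x], a, b, hh, hPa, hl, hPb => by
      have : x = a := by simpa using hh
      subst this
      have : x = b := by simpa using hl
      subst this
      exact absurd hPa hPb
  | x :: y :: l, a, b, hh, hPa, hl, hPb => by
      have hx : x = a := by simpa using hh
      subst hx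
      by_cases hPy : Pr y
      · have hl' : (y :: l).getLast? = some b := by rwa [List.getLast?_cons_cons] at hl
        obtain ⟨e, he, hPe⟩ := exists_crossing (p := y :: l) rfl hPy hl' hPb
        exact ⟨e, by rw [pathEdges_cons₂]; exact List.mem_cons_of_mem _ he, hPe⟩
      · exact ⟨(x, y), by rw [pathEdges_cons₂]; exact List.mem_cons_self, hPa, hPy⟩

/-- Lemma A: extract a path from a flow of positive value. -/
lemma flow_path {F S : Finset (V × V)} {s t : V} (hst : s ≠ t) {N : ℕ}
    (hSF : S ⊆ F) (hcons : ∀ v, v ≠ s → v ≠ t → exc S v = 0)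
    (hval : exc S s = -(N + 1 : ℕ)) :
    ∃ q : List V, q.Nodup ∧ q.head? = some s ∧ q.getLast? = some t ∧
      (∀ e ∈ pathEdges q, e ∈ S) ∧
      (S \ (pathEdges q).toFinset ⊆ F ∧
       (∀ v, v ≠ s → v ≠ t → exc (S \ (pathEdges q).toFinset) v = 0) ∧
       exc (S \ (pathEdges q).toFinset) s = -(N : ℕ)) := by
  set rel : V → V → Prop := fun a b => (a, b) ∈ S with hrel
  have hreach : Relation.ReflTransGen rel s t := by
    by_contra hnt
    set R : Finset V := (insert s (S.image Prod.snd)).filter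
      (fun v => Relation.ReflTransGen rel s v) with hR
    have hsR : s ∈ R := by
      simp [hR, Finset.mem_filter, Relation.ReflTransGen.refl]
    have htR : t ∉ R := by
      intro ht
      exact hnt (Finset.mem_filter.1 ht).2
    have hclosed : ∀ e ∈ S, e.1 ∈ R → e.2 ∈ R := by
      intro e he h1
      have hreach1 : Relation.ReflTransGen rel s e.1 := (Finset.mem_filter.1 h1).2
      refine Finset.mem_filter.2 ⟨?_, hreach1.tail he⟩
      exact Finset.mem_insert_of_mem (Finset.mem_image.2 ⟨e, he, rfl⟩)
    have hsum := sum_exc S R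
    have hsum2 : ∑ v ∈ R, exc S v = exc S s := by
      refine Finset.sum_eq_single_of_mem s hsR ?_
      intro v hv hvs
      exact hcons v hvs (fun h => htR (h ▸ hv))
    have hle : (S.filter (fun e => e.1 ∈ R)).card ≤ (S.filter (fun e => e.2 ∈ R)).card := by
      apply Finset.card_le_card
      intro e he
      simp only [Finset.mem_filter] at he ⊢
      exact ⟨he.1, hclosed e he.1 he.2⟩
    rw [hsum2, hval] at hsum
    have : (0 : ℤ) ≤ ((S.filter (fun e => e.2 ∈ R)).card : ℤ) - ((S.filter (fun e => e.1 ∈ R)).card : ℤ) :=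
      sub_nonneg.2 (by exact_mod_cast hle)
    omega
  obtain ⟨q, hc, hh, hl, hnd⟩ := exists_nodup_path hreach
  have hedges : ∀ e ∈ pathEdges q, e ∈ S := fun e he => chain'_iff_pathEdges.1 hc e he
  have hTsub : (pathEdges q).toFinset ⊆ S := fun e he => hedges e (List.mem_toFinset.1 he)
  have hexcT := exc_pathEdges hnd hh hl hst
  refine ⟨q, hnd, hh, hl, hedges, fun e he => hSF (Finset.mem_sdiff.1 he).1, ?_, ?_⟩
  · intro v hvs hvt
    rw [exc_sdiff hTsub, hcons v hvs hvt, hexcT, if_neg hvt, if_neg hvs]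
    ring
  · rw [exc_sdiff hTsub, hval, hexcT, if_neg (fun h : s = t => hst h), if_pos rfl]
    push_cast
    ring

/-- Lemma B: augment a flow when all cuts are large. -/
lemma flow_augment {F S : Finset (V × V)} {s t : V} (hst : s ≠ t) {N : ℕ}
    (hSF : S ⊆ F) (hcons : ∀ v, v ≠ s → v ≠ t → exc S v = 0)
    (hval : exc S s = -(N : ℕ))
    (hcut : ∀ C ⊆ F, IsCut F s t C → N + 1 ≤ C.card) :
    ∃ S' : Finset (V × V), S' ⊆ F ∧ (∀ v, v ≠ s → v ≠ t → exc S' v = 0) ∧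
      exc S' s = -(N + 1 : ℕ) := by
  set rel : V → V → Prop := fun a b => ((a, b) ∈ F ∧ (a, b) ∉ S) ∨ (b, a) ∈ S with hrel
  have hreach : Relation.ReflTransGen rel s t := by
    by_contra hnt
    set R : Finset V := (insert s ((F.image Prod.fst) ∪ (F.image Prod.snd))).filter
      (fun v => Relation.ReflTransGen rel s v) with hR
    have hsR : s ∈ R := by simp [hR, Finset.mem_filter, Relation.ReflTransGen.refl]
    have htR : t ∉ R := fun ht => hnt (Finset.mem_filter.1 ht).2
    have hmemverts : ∀ e ∈ F, e.1 ∈ insert s ((F.image Prod.fst) ∪ (F.image Prod.snd)) ∧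
        e.2 ∈ insert s ((F.image Prod.fst) ∪ (F.image Prod.snd)) := by
      intro e he
      constructor
      · exact Finset.mem_insert_of_mem (Finset.mem_union_left _ (Finset.mem_image.2 ⟨e, he, rfl⟩))
      · exact Finset.mem_insert_of_mem (Finset.mem_union_right _ (Finset.mem_image.2 ⟨e, he, rfl⟩))
    have hclosed1 : ∀ e ∈ F, e ∉ S → e.1 ∈ R → e.2 ∈ R := by
      intro e he hes h1
      refine Finset.mem_filter.2 ⟨(hmemverts e he).2, ?_⟩
      exact (Finset.mem_filter.1 h1).2.tail (Or.inl ⟨he, hes⟩)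
    have hclosed2 : ∀ e ∈ S, e.2 ∈ R → e.1 ∈ R := by
      intro e he h2
      refine Finset.mem_filter.2 ⟨(hmemverts e (hSF he)).1, ?_⟩
      refine (Finset.mem_filter.1 h2).2.tail (Or.inr ?_)
      simpa using he
    -- the crossing cut
    set C : Finset (V × V) := F.filter (fun e => e.1 ∈ R ∧ e.2 ∉ R) with hC
    have hCcut : IsCut F s t C := by
      intro p hc hh hl
      obtain ⟨e, he, h1, h2⟩ := exists_crossing (Pr := fun v => v ∈ R) hh hsR hl htR
      refine ⟨e, he, Finset.mem_filter.2 ⟨chain'_iff_pathEdges.1 hc e he, h1, h2⟩⟩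
    have hCcard := hcut C (Finset.filter_subset _ _) hCcut
    -- compute |C| = N
    have hCS : C ⊆ S.filter (fun e => e.1 ∈ R ∧ e.2 ∉ R) := by
      intro e he
      obtain ⟨heF, h1, h2⟩ := Finset.mem_filter.1 he
      by_cases hes : e ∈ S
      · exact Finset.mem_filter.2 ⟨hes, h1, h2⟩
      · exact absurd (hclosed1 e heF hes h1) h2
    have hSC : S.filter (fun e => e.1 ∈ R ∧ e.2 ∉ R) ⊆ C := by
      intro e he
      obtain ⟨heS, h1, h2⟩ := Finset.mem_filter.1 he
      exact Finset.mem_filter.2 ⟨hSF heS, h1, h2⟩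
    have hCeq : C = S.filter (fun e => e.1 ∈ R ∧ e.2 ∉ R) := le_antisymm hCS hSC
    -- sum of exc over R
    have hsum := sum_exc S R
    have hsum2 : ∑ v ∈ R, exc S v = exc S s := by
      refine Finset.sum_eq_single_of_mem s hsR ?_
      intro v hv hvs
      exact hcons v hvs (fun h => htR (h ▸ hv))
    -- split the out-filter
    have hsplit1 : (S.filter (fun e => e.1 ∈ R)).card =
        (S.filter (fun e => e.1 ∈ R ∧ e.2 ∈ R)).card + (S.filter (fun e => e.1 ∈ R ∧ e.2 ∉ R)).card := by
      rw [← Finset.filter_filter, ← Finset.filter_filter]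
      exact (Finset.card_filter_add_card_filter_not (p := fun e : V × V => e.2 ∈ R)).symm
    have hsplit2 : (S.filter (fun e => e.2 ∈ R)).card = (S.filter (fun e => e.1 ∈ R ∧ e.2 ∈ R)).card := by
      congr 1
      ext e
      simp only [Finset.mem_filter]
      constructor
      · rintro ⟨he, h2⟩
        exact ⟨he, hclosed2 e he h2, h2⟩
      · rintro ⟨he, _, h2⟩
        exact ⟨he, h2⟩
    rw [hsum2, hval] at hsum
    rw [hCeq] at hCcard
    rw [hsplit1, hsplit2] at hsum
    push_cast at hsum
    omega
  -- build the augmented flow from a residual path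
  obtain ⟨q, hc, hh, hl, hnd⟩ := exists_nodup_path hreach
  have hedges : ∀ e ∈ pathEdges q, rel e.1 e.2 := fun e he => chain'_iff_pathEdges.1 hc e he
  set Tq : Finset (V × V) := (pathEdges q).toFinset with hTq
  set fwd : Finset (V × V) := Tq.filter (fun e => e ∈ F ∧ e ∉ S) with hfwd
  set bwdSrc : Finset (V × V) := Tq.filter (fun e => ¬ (e ∈ F ∧ e ∉ S)) with hbwdSrc
  set rev : Finset (V × V) := bwdSrc.image Prod.swap with hrev
  have hrevS : rev ⊆ S := by
    intro e he
    obtain ⟨e', he', rfl⟩ := Finset.mem_image.1 he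
    obtain ⟨hT, hne⟩ := Finset.mem_filter.1 he'
    have := hedges e' (List.mem_toFinset.1 hT)
    rcases this with h | h
    · exact absurd h hne
    · simpa [Prod.swap] using h
  refine ⟨(S \ rev) ∪ fwd, ?_, ?_, ?_⟩
  · intro e he
    rcases Finset.mem_union.1 he with h | h
    · exact hSF (Finset.mem_sdiff.1 h).1
    · exact (Finset.mem_filter.1 h).2.1
  all_goals {
    have hdisj : Disjoint (S \ rev) fwd := by
      refine Finset.disjoint_left.2 ?_
      intro e he hef
      exact (Finset.mem_filter.1 hef).2.2 (Finset.mem_sdiff.1 he).1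
    have hTsplit : Tq = fwd ∪ bwdSrc := (Finset.filter_union_filter_not_eq _ _).symm
    have hTdisj : Disjoint fwd bwdSrc := Finset.disjoint_filter_filter_not _ _ _
    have hkey : ∀ v, exc ((S \ rev) ∪ fwd) v = exc S v + exc Tq v := by
      intro v
      rw [exc_union hdisj, exc_sdiff hrevS, hrev, exc_swap, hTsplit, exc_union hTdisj]
      ring
    have hexcT := exc_pathEdges hnd hh hl hst
    first
    | (intro v hvs hvt
       rw [hkey, hcons v hvs hvt, hexcT, if_neg hvt, if_neg hvs]
       ring)
    | (rw [hkey, hval, hexcT, if_neg (fun h : s = t => hst h), if_pos rfl]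
       push_cast
       ring)
  }

/-- Build a flow of any value bounded by the min cut. -/
lemma exists_flow {F : Finset (V × V)} {s t : V} (hst : s ≠ t) :
    ∀ N : ℕ, (∀ C ⊆ F, IsCut F s t C → N ≤ C.card) →
    ∃ S : Finset (V × V), S ⊆ F ∧ (∀ v, v ≠ s → v ≠ t → exc S v = 0) ∧
      exc S s = -(N : ℕ) := by
  intro N
  induction N with
  | zero =>
    intro _
    refine ⟨∅, Finset.empty_subset _, ?_, ?_⟩ <;> simp [exc, indeg, outdeg]
  | succ n ih =>
    intro hcut
    obtain ⟨S, hSF, hcons, hval⟩ := ih (fun C hC hcut' => le_trans (Nat.le_succ n) (hcut C hC hcut'))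
    exact flow_augment hst hSF hcons hval hcut

/-- Decompose a flow into edge-disjoint paths. -/
lemma flow_decomp {F : Finset (V × V)} {s t : V} (hst : s ≠ t) :
    ∀ (N : ℕ) (S : Finset (V × V)), S ⊆ F → (∀ v, v ≠ s → v ≠ t → exc S v = 0) →
    exc S s = -(N : ℕ) →
    ∃ L : List (List V), L.length = N ∧
      (∀ q ∈ L, q.Nodup ∧ q.head? = some s ∧ q.getLast? = some t ∧
        ∀ e ∈ pathEdges q, e ∈ S) ∧
      L.Pairwise (fun p p' => ∀ e ∈ pathEdges p, e ∉ pathEdges p') := by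
  intro N
  induction N with
  | zero =>
    intro S _ _ _
    exact ⟨[], rfl, by simp, by simp⟩
  | succ n ih =>
    intro S hSF hcons hval
    obtain ⟨q, hnd, hh, hl, hedges, hsub', hcons', hval'⟩ := flow_path hst hSF hcons hval
    obtain ⟨L, hlen, hprops, hpw⟩ := ih (S \ (pathEdges q).toFinset)
      hsub' hcons' hval'
    refine ⟨q :: L, by simp [hlen], ?_, ?_⟩
    · intro p hp
      rcases List.mem_cons.1 hp with rfl | hp
      · exact ⟨hnd, hh, hl, hedges⟩
      · obtain ⟨h1, h2, h3, h4⟩ := hprops p hp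
        exact ⟨h1, h2, h3, fun e he => (Finset.mem_sdiff.1 (h4 e he)).1⟩
    · refine List.pairwise_cons.2 ⟨?_, hpw⟩
      intro p hp e heq hep
      have := (hprops p hp).2.2.2 e hep
      exact (Finset.mem_sdiff.1 this).2 (List.mem_toFinset.2 heq)


lemma sum_union_le {α : Type*} [DecidableEq α] (f : α → ℝ) (hf : ∀ e, 0 ≤ f e)
    (A B : Finset α) : ∑ e ∈ A ∪ B, f e ≤ ∑ e ∈ A, f e + ∑ e ∈ B, f e := by
  rw [← Finset.union_sdiff_self_eq_union, Finset.sum_union Finset.disjoint_sdiff]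
  exact add_le_add_right (Finset.sum_le_sum_of_subset_of_nonneg (Finset.sdiff_subset)
    (fun e _ _ => hf e)) _

lemma sum_biUnion_le {ι α : Type*} [DecidableEq α] (f : α → ℝ) (hf : ∀ e, 0 ≤ f e)
    (s : Finset ι) (t : ι → Finset α) :
    ∑ e ∈ s.biUnion t, f e ≤ ∑ i ∈ s, ∑ e ∈ t i, f e := by
  induction s using Finset.induction_on with
  | empty => simp
  | insert _ _ ha ih =>
    rw [Finset.biUnion_insert, Finset.sum_insert ha]
    exact le_trans (sum_union_le f hf _ _) (add_le_add_right ih _)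

lemma mul_length_le_sum (c : ℝ) : ∀ (l : List ℝ), (∀ x ∈ l, c ≤ x) → c * l.length ≤ l.sum
  | [], _ => by simp
  | x :: l, h => by
      have ih := mul_length_le_sum c l (fun y hy => h y (List.mem_cons_of_mem _ hy))
      have hx := h x List.mem_cons_self
      simp only [List.length_cons, List.sum_cons]
      push_cast
      nlinarith

lemma disjoint_paths_sum (ℓ : V × V → ℝ) (hℓ : ∀ e, 0 ≤ ℓ e) :
    ∀ (L : List (List V)) (G : Finset (V × V)),
      (∀ q ∈ L, q.Nodup ∧ ∀ e ∈ pathEdges q, e ∈ G) →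
      L.Pairwise (fun p p' => ∀ e ∈ pathEdges p, e ∉ pathEdges p') →
      (L.map (fun q => ((pathEdges q).map ℓ).sum)).sum ≤ ∑ e ∈ G, ℓ e
  | [], G, _, _ => by
      simp only [List.map_nil, List.sum_nil]
      exact Finset.sum_nonneg (fun e _ => hℓ e)
  | q :: L, G, hprop, hpw => by
      obtain ⟨hnd, hsub⟩ := hprop q List.mem_cons_self
      have hTsub : (pathEdges q).toFinset ⊆ G := fun e he => hsub e (List.mem_toFinset.1 he)
      have hdisj := (List.pairwise_cons.1 hpw).1
      have ih := disjoint_paths_sum ℓ hℓ L (G \ (pathEdges q).toFinset)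
        (by
          intro q' hq'
          obtain ⟨hnd', hsub'⟩ := hprop q' (List.mem_cons_of_mem _ hq')
          refine ⟨hnd', fun e he => Finset.mem_sdiff.2 ⟨hsub' e he, fun hmem => ?_⟩⟩
          exact hdisj q' hq' e (List.mem_toFinset.1 hmem) he)
        ((List.pairwise_cons.1 hpw).2)
      simp only [List.map_cons, List.sum_cons]
      have hq : ((pathEdges q).map ℓ).sum = ∑ e ∈ (pathEdges q).toFinset, ℓ e :=
        (List.sum_toFinset ℓ (pathEdges_nodup hnd)).symm
      rw [hq]
      calc ∑ e ∈ (pathEdges q).toFinset, ℓ e + (L.map (fun q => ((pathEdges q).map ℓ).sum)).sum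
          ≤ ∑ e ∈ (pathEdges q).toFinset, ℓ e + ∑ e ∈ G \ (pathEdges q).toFinset, ℓ e := by
            exact add_le_add_right ih _
        _ = ∑ e ∈ G, ℓ e := by
            rw [add_comm]
            exact Finset.sum_sdiff hTsub


end Stmt7

open Stmt7 in
/-- Let `H` be a directed graph with `s, t`, and a collection `P'` of `k` simple
`s`-`t` paths, each of total length at most `1/(32 log m)`, such that the paths in
`P'` cause edge-congestion at most `log m`. Then the subgraph `H*` consisting of the
union of the edges of paths in `P'` contains a collection of at least `k/(2 log m)`
edge-disjoint `s`-`t` paths, each of total length at most `1/8` (edge lengths in `H*`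
equal those in `H`). -/
theorem stmt7 {V : Type*} [DecidableEq V] (E : Finset (V × V)) (s t : V)
    (ℓ : V × V → ℝ) (m k : ℕ) (P : Fin k → List V)
    (hℓ : ∀ e, 0 ≤ ℓ e) (hm : 2 ≤ m)
    (hpath : ∀ i, IsPath E s t (P i))
    (hshort : ∀ i, ((pathEdges (P i)).map ℓ).sum ≤ 1 / (32 * Real.logb 2 (m : ℝ)))
    (hcong : ∀ e : V × V,
      ((Finset.univ.filter (fun i : Fin k => e ∈ pathEdges (P i))).card : ℝ) ≤
        Real.logb 2 (m : ℝ)) :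
    ∃ (r : ℕ) (Q : Fin r → List V),
      (k : ℝ) / (2 * Real.logb 2 (m : ℝ)) ≤ (r : ℝ) ∧
      (∀ j, IsPath E s t (Q j)) ∧
      (∀ j, ∀ e ∈ pathEdges (Q j), ∃ i, e ∈ pathEdges (P i)) ∧
      (∀ j, ((pathEdges (Q j)).map ℓ).sum ≤ 1 / 8) ∧
      (∀ j j', j ≠ j' → ∀ e ∈ pathEdges (Q j), e ∉ pathEdges (Q j')) := by
  have hm2 : (2 : ℝ) ≤ (m : ℝ) := by exact_mod_cast hm
  set η := Real.logb 2 (m : ℝ) with hηdef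
  have hη1 : 1 ≤ η := by
    rw [hηdef, ← Real.logb_self_eq_one (b := 2) one_lt_two]
    exact (Real.logb_le_logb one_lt_two (by norm_num) (by linarith)).2 hm2
  have hηpos : 0 < η := lt_of_lt_of_le one_pos hη1
  by_cases hst : s = t
  · subst hst
    refine ⟨k, fun _ => [s], ?_, ?_, ?_, ?_, ?_⟩
    · exact div_le_self (by positivity) (by linarith)
    · intro j
      exact ⟨List.isChain_singleton _, rfl, rfl, List.nodup_singleton _⟩
    · intro j e he
      simp [pathEdges_single] at he
    · intro j
      simp only [pathEdges_single, List.map_nil, List.sum_nil]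
      norm_num
    · intro j j' hjj e he
      simp [pathEdges_single] at he
  · set F := E.filter (fun e => ∃ i, e ∈ pathEdges (P i)) with hF
    have hPE : ∀ i, ∀ e ∈ pathEdges (P i), e ∈ E :=
      fun i e he => chain'_iff_pathEdges.1 (hpath i).1 e he
    have hPF : ∀ i, ∀ e ∈ pathEdges (P i), e ∈ F :=
      fun i e he => Finset.mem_filter.2 ⟨hPE i e he, ⟨i, he⟩⟩
    set N := ⌈(k : ℝ) / η⌉₊ with hN
    have hcutN : ∀ C ⊆ F, IsCut F s t C → N ≤ C.card := by
      intro C hCF hcut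
      have hcount : (k : ℝ) ≤ (C.card : ℝ) * η := by
        have hsub : (Finset.univ : Finset (Fin k)) ⊆
            C.biUnion (fun e => Finset.univ.filter (fun i => e ∈ pathEdges (P i))) := by
          intro i _
          obtain ⟨e, he, heC⟩ := hcut (P i)
            (chain'_iff_pathEdges.2 (fun e he => hPF i e he))
            (hpath i).2.1 (hpath i).2.2.1
          exact Finset.mem_biUnion.2 ⟨e, heC, Finset.mem_filter.2 ⟨Finset.mem_univ _, he⟩⟩
        have h1 : k ≤ ∑ e ∈ C, (Finset.univ.filter (fun i => e ∈ pathEdges (P i))).card := by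
          calc k = (Finset.univ : Finset (Fin k)).card := by simp
            _ ≤ _ := le_trans (Finset.card_le_card hsub) Finset.card_biUnion_le
        calc (k : ℝ) ≤ ∑ e ∈ C, ((Finset.univ.filter (fun i => e ∈ pathEdges (P i))).card : ℝ) := by
              exact_mod_cast h1
          _ ≤ ∑ _e ∈ C, η := Finset.sum_le_sum (fun e _ => hcong e)
          _ = C.card * η := by rw [Finset.sum_const, nsmul_eq_mul]
      rw [hN, Nat.ceil_le, div_le_iff₀ hηpos]
      exact hcount
    obtain ⟨S, hSF, hcons, hval⟩ := exists_flow hst N hcutN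
    obtain ⟨L, hlen, hprops, hpw⟩ := flow_decomp hst N S hSF hcons hval
    have hFE : F ⊆ E := Finset.filter_subset _ _
    have hLpath : ∀ q ∈ L, IsPath E s t q := by
      intro q hq
      obtain ⟨hnd, hh, hl, hedg⟩ := hprops q hq
      exact ⟨chain'_iff_pathEdges.2 (fun e he => hFE (hSF (hedg e he))), hh, hl, hnd⟩
    have hsumF : ∑ e ∈ F, ℓ e ≤ (k : ℝ) * (1 / (32 * η)) := by
      have hsub : F ⊆ Finset.univ.biUnion (fun i : Fin k => (pathEdges (P i)).toFinset) := by
        intro e he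
        obtain ⟨_, i, hi⟩ := Finset.mem_filter.1 he
        exact Finset.mem_biUnion.2 ⟨i, Finset.mem_univ _, List.mem_toFinset.2 hi⟩
      calc ∑ e ∈ F, ℓ e
          ≤ ∑ e ∈ Finset.univ.biUnion (fun i : Fin k => (pathEdges (P i)).toFinset), ℓ e :=
            Finset.sum_le_sum_of_subset_of_nonneg hsub (fun e _ _ => hℓ e)
        _ ≤ ∑ i : Fin k, ∑ e ∈ (pathEdges (P i)).toFinset, ℓ e :=
            sum_biUnion_le ℓ hℓ _ _
        _ ≤ ∑ _i : Fin k, 1 / (32 * η) := by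
            refine Finset.sum_le_sum (fun i _ => ?_)
            rw [List.sum_toFinset ℓ (pathEdges_nodup (hpath i).2.2.2)]
            exact hshort i
        _ = k * (1 / (32 * η)) := by
            rw [Finset.sum_const, nsmul_eq_mul]
            simp
    set pred : List V → Bool := fun q => decide (((pathEdges q).map ℓ).sum ≤ 1 / 8) with hpred
    set Ls := L.filter pred with hLs
    set Ll := L.filter (fun q => ! pred q) with hLl
    have hsplitlen : Ls.length + Ll.length = N := by
      rw [hLs, hLl, ← hlen, ← List.countP_eq_length_filter, ← List.countP_eq_length_filter]
      have h := (List.length_eq_countP_add_countP pred (l := L)).symm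
      have he : (fun a => decide (¬ pred a = true)) = (fun q => ! pred q) := by
        funext a
        cases h' : pred a <;> simp [h']
      rwa [he] at h
    have hlongsum : (Ll.length : ℝ) * (1 / 8) ≤ (k : ℝ) * (1 / (32 * η)) := by
      refine le_trans ?_ hsumF
      have h1 : (1 / 8 : ℝ) * (Ll.map (fun q => ((pathEdges q).map ℓ).sum)).length
          ≤ (Ll.map (fun q => ((pathEdges q).map ℓ).sum)).sum := by
        refine mul_length_le_sum _ _ ?_
        intro x hx
        obtain ⟨q, hq, rfl⟩ := List.mem_map.1 hx
        have := List.of_mem_filter hq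
        simp only [Bool.not_eq_true'] at this
        have := of_decide_eq_false this
        linarith [lt_of_not_ge this]
      have h2 : (Ll.map (fun q => ((pathEdges q).map ℓ).sum)).sum ≤ ∑ e ∈ F, ℓ e := by
        refine disjoint_paths_sum ℓ hℓ Ll F ?_ ?_
        · intro q hq
          obtain ⟨hnd, _, _, hedg⟩ := hprops q (List.mem_of_mem_filter hq)
          exact ⟨hnd, fun e he => hSF (hedg e he)⟩
        · exact List.Pairwise.sublist (List.filter_sublist (l := L)) hpw
      rw [List.length_map] at h1
      calc (Ll.length : ℝ) * (1 / 8) = (1 / 8 : ℝ) * Ll.length := by ring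
        _ ≤ _ := le_trans h1 h2
    have hNk : (k : ℝ) / η ≤ (N : ℝ) := Nat.le_ceil _
    have hrN : (Ls.length : ℝ) + (Ll.length : ℝ) = (N : ℝ) := by exact_mod_cast hsplitlen
    have hkpos : (0 : ℝ) ≤ (k : ℝ) / η := by positivity
    refine ⟨Ls.length, fun j => Ls.get j, ?_, ?_, ?_, ?_, ?_⟩
    · -- the count bound
      have heq1 : (k : ℝ) * (1 / (32 * η)) = ((k : ℝ) / η) / 32 := by
        rw [mul_one_div, div_div, mul_comm]
      have heq2 : (k : ℝ) / (2 * η) = ((k : ℝ) / η) / 2 := by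
        rw [div_div, mul_comm]
      rw [heq2]
      rw [heq1] at hlongsum
      nlinarith [hlongsum, hNk, hrN, hkpos]
    · intro j
      exact hLpath _ (List.mem_of_mem_filter (Ls.get_mem j))
    · intro j e he
      obtain ⟨_, _, _, hedg⟩ := hprops _ (List.mem_of_mem_filter (Ls.get_mem j))
      have := hSF (hedg e he)
      exact (Finset.mem_filter.1 this).2
    · intro j
      have := List.of_mem_filter (Ls.get_mem j)
      exact of_decide_eq_true this
    · have hpwLs : Ls.Pairwise (fun p p' => ∀ e ∈ pathEdges p, e ∉ pathEdges p') :=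
        List.Pairwise.sublist (List.filter_sublist (l := L)) hpw
      rw [List.pairwise_iff_get] at hpwLs
      intro j j' hne e hej hej'
      rcases lt_or_gt_of_ne hne with h | h
      · exact hpwLs j j' h e hej hej'
      · exact hpwLs j' j h e hej' hej
end

section
/- Let P be a simple path in a directed graph G equipped with an approximate topological order (X, ρ), such that all edges of P connecting distinct clusters are either left-to-right edges or right-to-left edges as defined by the interval order. Then the sum over edges e of P of skip(e) is at most n + 2·Σ_{e ∈ E(G)} span(e), where n is the number of vertices. -/
/-- The `skip` value of an edge `(x,y)` with respect to an approximate topological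
order given by a cluster map `cl` and interval endpoints `a` (first) and `z` (last). -/
def skip {V ι : Type*} [DecidableEq ι] (cl : V → ι) (a z : ι → ℤ) (x y : V) : ℤ :=
  if cl x = cl y then 0
  else if z (cl x) < a (cl y) then a (cl y) - z (cl x)
  else a (cl x) - z (cl y)

/-- The `span` value of an edge `(x,y)` with respect to an approximate topological
order: nonzero only for right-to-left edges. -/
def spanE {V ι : Type*} [DecidableEq ι] (cl : V → ι) (a z : ι → ℤ) (x y : V) : ℤ :=
  if cl x = cl y then 0
  else if z (cl x) < a (cl y) then 0
  else z (cl x) - a (cl y)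

lemma spanE_nonneg {V ι : Type*} [DecidableEq ι] (cl : V → ι) (a z : ι → ℤ)
    (x y : V) : 0 ≤ spanE cl a z x y := by
  unfold spanE; split_ifs <;> omega

lemma skip_le {V ι : Type*} [DecidableEq ι] (cl : V → ι) (a z : ι → ℤ)
    (n : ℕ) (hiv : ∀ i, 1 ≤ a i ∧ a i ≤ z i ∧ z i ≤ (n : ℤ)) (x y : V) :
    skip cl a z x y ≤ z (cl y) - z (cl x) + 2 * spanE cl a z x y := by
  have h1 := hiv (cl x)
  have h2 := hiv (cl y)
  unfold skip spanE
  split_ifs with h h'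
  · simp [h]
  · omega
  · omega

lemma telescope {V : Type*} (F : V → ℤ) :
    ∀ (xs : List V) (x : V),
      (((x :: xs).zip xs).map (fun e => F e.2 - F e.1)).sum
        = F ((x :: xs).getLast (by simp)) - F x := by
  intro xs
  induction xs with
  | nil => intro x; simp
  | cons y ys ih =>
    intro x
    have := ih y
    simp only [List.zip_cons_cons, List.map_cons, List.sum_cons] at *
    rw [List.getLast_cons (by simp)]
    omega

lemma chain_mem {α : Type*} {R : α → α → Prop} :
    ∀ {p : List α}, p.Chain' R → ∀ e ∈ p.zip p.tail, R e.1 e.2 := by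
  intro p
  induction p with
  | nil => simp
  | cons x xs ih =>
    intro hc e he
    cases xs with
    | nil => simp at he
    | cons y ys =>
      simp only [List.Chain', List.isChain_cons_cons] at hc
      simp only [List.tail_cons, List.zip_cons_cons, List.mem_cons] at he
      rcases he with rfl | he
      · exact hc.1
      · exact ih hc.2 e he

lemma zip_fst_sublist {α : Type*} :
    ∀ (p : List α), ((p.zip p.tail).map Prod.fst).Sublist p := by
  intro p
  cases p with
  | nil => simp
  | cons x xs =>
    induction xs generalizing x with
    | nil => simp
    | cons y ys ih =>
      simp only [List.tail_cons, List.zip_cons_cons, List.map_cons]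
      exact List.Sublist.cons₂ x (ih y)

/-- Let `P` be a simple path in a directed graph `G` equipped with an approximate
topological order (clusters with mutually disjoint contiguous intervals inside
`{1,...,n}`, where `n` is the number of vertices). Then the sum over edges `e` of `P`
of `skip(e)` is at most `n + 2·Σ_{e ∈ E(G)} span(e)`. -/
theorem stmt10 {V ι : Type*} [Fintype V] [DecidableEq ι] (E : Finset (V × V))
    (cl : V → ι) (a z : ι → ℤ) (n : ℕ)
    (hn : n = Fintype.card V)
    (hiv : ∀ i, 1 ≤ a i ∧ a i ≤ z i ∧ z i ≤ (n : ℤ))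
    (hdisj : ∀ i j, i ≠ j → z i < a j ∨ z j < a i)
    (p : List V)
    (hchain : p.Chain' (fun u v => (u, v) ∈ E))
    (hsimple : p.Nodup) :
    ((p.zip p.tail).map (fun e => skip cl a z e.1 e.2)).sum ≤
      (n : ℤ) + 2 * ∑ e ∈ E, spanE cl a z e.1 e.2 := by
  have hspan_sum : 0 ≤ ∑ e ∈ E, spanE cl a z e.1 e.2 :=
    Finset.sum_nonneg fun e _ => spanE_nonneg cl a z e.1 e.2
  classical
  cases p with
  | nil =>
    simp only [List.zip_nil_left, List.map_nil, List.sum_nil]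
    positivity
  | cons x xs =>
    set p := x :: xs with hp
    set L := p.zip p.tail with hL
    -- step 1: edgewise bound
    have h1 : (L.map (fun e => skip cl a z e.1 e.2)).sum ≤
        (L.map (fun e => z (cl e.2) - z (cl e.1))).sum
          + 2 * (L.map (fun e => spanE cl a z e.1 e.2)).sum := by
      have : (L.map (fun e => skip cl a z e.1 e.2)).sum ≤
          (L.map (fun e => z (cl e.2) - z (cl e.1) + 2 * spanE cl a z e.1 e.2)).sum := by
        apply List.sum_le_sum
        intro e _
        exact skip_le cl a z n hiv e.1 e.2
      calc (L.map (fun e => skip cl a z e.1 e.2)).sum ≤ _ := this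
        _ = _ := by
          rw [← List.sum_map_mul_left]
          induction L with
          | nil => simp
          | cons h t iht => simp only [List.map_cons, List.sum_cons, iht]; ring
    -- step 2: telescoping
    have h2 : (L.map (fun e => z (cl e.2) - z (cl e.1))).sum ≤ (n : ℤ) := by
      rw [hL, hp, List.tail_cons, telescope (fun v => z (cl v)) xs x]
      have ha := hiv (cl (((x :: xs)).getLast (by simp)))
      have hb := hiv (cl x)
      omega
    -- step 3: span sum over path ≤ span sum over E
    have hnd : L.Nodup := by
      have hmap : ((p.zip p.tail).map Prod.fst).Nodup :=
        (zip_fst_sublist p).nodup hsimple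
      exact hmap.of_map Prod.fst
    have hsub : L.toFinset ⊆ E := by
      intro e he
      rw [List.mem_toFinset] at he
      have := chain_mem hchain e he
      simpa using this
    have h3 : (L.map (fun e => spanE cl a z e.1 e.2)).sum ≤
        ∑ e ∈ E, spanE cl a z e.1 e.2 := by
      rw [← List.sum_toFinset _ hnd]
      exact Finset.sum_le_sum_of_subset_of_nonneg hsub
        (fun e _ _ => spanE_nonneg cl a z e.1 e.2)
    calc (L.map (fun e => skip cl a z e.1 e.2)).sum
        ≤ (L.map (fun e => z (cl e.2) - z (cl e.1))).sum
          + 2 * (L.map (fun e => spanE cl a z e.1 e.2)).sum := h1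
      _ ≤ (n : ℤ) + 2 * ∑ e ∈ E, spanE cl a z e.1 e.2 := by
          linarith [h2, h3]
end

section
/- Given a collection Q of edge-disjoint paths in a directed graph G equipped with an approximate topological order, there exists a path P ∈ Q with Σ_{e ∈ E(P)} skip(e) ≤ n + 2·(Σ_{e ∈ E(G)} span(e))/|Q|. -/
section Aux

variable {V ι : Type*} [DecidableEq ι] (cl : V → ι) (a z : ι → ℤ)

lemma skip_le_aux (hav : ∀ i, a i ≤ z i) (x y : V) :
    skip cl a z x y ≤ z (cl y) - z (cl x) + 2 * spanE cl a z x y := by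
  unfold skip spanE
  split_ifs with h1 h2
  · rw [h1]; simp
  · have := hav (cl y); linarith
  · have h3 := hav (cl x); have h4 := hav (cl y)
    push_neg at h2
    linarith

lemma spanE_nonneg_aux (x y : V) : 0 ≤ spanE cl a z x y := by
  unfold spanE
  split_ifs with h1 h2
  · exact le_refl 0
  · exact le_refl 0
  · push_neg at h2; linarith

lemma path_sum_aux (hav : ∀ i, a i ≤ z i) :
    ∀ (l : List V) (x : V),
      ((((x :: l).zip l).map (fun e => skip cl a z e.1 e.2)).sum : ℤ) ≤
        z (cl ((x :: l).getLast (by simp))) - z (cl x)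
          + 2 * (((x :: l).zip l).map (fun e => spanE cl a z e.1 e.2)).sum := by
  intro l
  induction l with
  | nil => intro x; simp
  | cons y l ih =>
    intro x
    have h1 := ih y
    have h2 := skip_le_aux cl a z hav x y
    have hlast : (x :: y :: l).getLast (by simp) = (y :: l).getLast (by simp) := by
      rw [List.getLast_cons (by simp)]
    simp only [List.zip_cons_cons, List.map_cons, List.sum_cons] at *
    rw [hlast]
    linarith

lemma path_bound_aux (n : ℕ) (hiv : ∀ i, 1 ≤ a i ∧ a i ≤ z i ∧ z i ≤ (n : ℤ)) :
    ∀ (l : List V),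
      (((l.zip l.tail).map (fun e => skip cl a z e.1 e.2)).sum : ℤ) ≤
        (n : ℤ) + 2 * ((l.zip l.tail).map (fun e => spanE cl a z e.1 e.2)).sum := by
  intro l
  match l with
  | [] => simp
  | x :: rest =>
    have h := path_sum_aux cl a z (fun i => (hiv i).2.1) rest x
    have h1 := (hiv (cl ((x :: rest).getLast (by simp)))).2.2
    have h2 := (hiv (cl x)).1
    have h3 := (hiv (cl x)).2.1
    simp only [List.tail_cons]
    linarith

lemma zip_tail_nodup_aux : ∀ (l : List V), l.Nodup → (l.zip l.tail).Nodup
  | [], _ => by simp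
  | [_], _ => by simp
  | x :: y :: l, h => by
    simp only [List.tail_cons, List.zip_cons_cons]
    refine List.nodup_cons.mpr ⟨?_, ?_⟩
    · intro hmem
      have hx : x ∈ y :: l := (List.of_mem_zip hmem).1
      exact (List.nodup_cons.mp h).1 hx
    · exact zip_tail_nodup_aux (y :: l) (List.nodup_cons.mp h).2

lemma chain'_zip_tail_aux {R : V → V → Prop} :
    ∀ (l : List V), l.Chain' R → ∀ p ∈ l.zip l.tail, R p.1 p.2
  | [], _, p, hp => by simp at hp
  | [_], _, p, hp => by simp at hp
  | x :: y :: l, h, p, hp => by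
    simp only [List.tail_cons, List.zip_cons_cons, List.mem_cons] at hp
    rcases hp with rfl | hp
    · exact (List.isChain_cons_cons.mp h).1
    · exact chain'_zip_tail_aux (y :: l) (List.isChain_cons_cons.mp h).2 p hp

end Aux

/-- Given a collection `Q` of edge-disjoint simple paths in a directed graph `G`
equipped with an approximate topological order, there exists a path `P ∈ Q` with
`Σ_{e ∈ E(P)} skip(e) ≤ n + 2·(Σ_{e ∈ E(G)} span(e))/|Q|`. -/
theorem stmt11 {V ι : Type*} [Fintype V] [DecidableEq V] [DecidableEq ι]
    (E : Finset (V × V)) (cl : V → ι) (a z : ι → ℤ) (n k : ℕ)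
    (hn : n = Fintype.card V) (hk : 0 < k)
    (hiv : ∀ i, 1 ≤ a i ∧ a i ≤ z i ∧ z i ≤ (n : ℤ))
    (hdisj : ∀ i j, i ≠ j → z i < a j ∨ z j < a i)
    (Q : Fin k → List V)
    (hchain : ∀ i, (Q i).Chain' (fun u v => (u, v) ∈ E))
    (hsimple : ∀ i, (Q i).Nodup)
    (hedisj : ∀ i j, i ≠ j → ∀ e ∈ (Q i).zip (Q i).tail, e ∉ (Q j).zip (Q j).tail) :
    ∃ i : Fin k,
      (((((Q i).zip (Q i).tail).map (fun e => skip cl a z e.1 e.2)).sum : ℤ) : ℝ) ≤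
        (n : ℝ) + 2 * (∑ e ∈ E, ((spanE cl a z e.1 e.2 : ℤ) : ℝ)) / (k : ℝ) := by
  classical
  set f : Fin k → ℤ := fun i => (((Q i).zip (Q i).tail).map (fun e => skip cl a z e.1 e.2)).sum
    with hf
  set g : Fin k → ℤ := fun i => (((Q i).zip (Q i).tail).map (fun e => spanE cl a z e.1 e.2)).sum
    with hg
  set S : ℤ := ∑ e ∈ E, spanE cl a z e.1 e.2 with hS
  have hpath : ∀ i, f i ≤ (n : ℤ) + 2 * g i := fun i => path_bound_aux cl a z n hiv (Q i)
  set T : Fin k → Finset (V × V) := fun i => ((Q i).zip (Q i).tail).toFinset with hT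
  have hTE : ∀ i, T i ⊆ E := by
    intro i e he
    rw [hT, List.mem_toFinset] at he
    have := chain'_zip_tail_aux (Q i) (hchain i) e he
    exact this
  have hgd : ∀ i, g i = ∑ e ∈ T i, spanE cl a z e.1 e.2 := by
    intro i
    rw [hg, hT]
    exact (List.sum_toFinset _ (zip_tail_nodup_aux _ (hsimple i))).symm
  have hdisjT : ((Finset.univ : Finset (Fin k)) : Set (Fin k)).PairwiseDisjoint T := by
    intro i _ j _ hij
    simp only [Function.onFun]
    rw [Finset.disjoint_left]
    intro e hei hej
    rw [hT, List.mem_toFinset] at hei hej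
    exact hedisj i j hij e hei hej
  have hsumg : ∑ i, g i ≤ S := by
    calc ∑ i, g i = ∑ e ∈ Finset.univ.biUnion T, spanE cl a z e.1 e.2 := by
          rw [Finset.sum_biUnion hdisjT]
          exact Finset.sum_congr rfl fun i _ => hgd i
      _ ≤ S := by
          refine Finset.sum_le_sum_of_subset_of_nonneg ?_ ?_
          · intro e he
            rw [Finset.mem_biUnion] at he
            obtain ⟨i, _, hei⟩ := he
            exact hTE i hei
          · intro e _ _
            exact spanE_nonneg_aux cl a z e.1 e.2
  obtain ⟨i, _, hi⟩ := Finset.exists_min_image (Finset.univ : Finset (Fin k)) f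
    ⟨⟨0, hk⟩, Finset.mem_univ _⟩
  refine ⟨i, ?_⟩
  have h1 : (k : ℤ) * f i ≤ ∑ j, f j := by
    calc (k : ℤ) * f i = ∑ _j : Fin k, f i := by
          simp [Finset.sum_const, mul_comm]
      _ ≤ ∑ j, f j := Finset.sum_le_sum fun j _ => hi j (Finset.mem_univ j)
  have h2 : ∑ j, f j ≤ (k : ℤ) * n + 2 * S := by
    calc ∑ j, f j ≤ ∑ j : Fin k, ((n : ℤ) + 2 * g j) :=
          Finset.sum_le_sum fun j _ => hpath j
      _ = (k : ℤ) * n + 2 * ∑ j, g j := by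
          rw [Finset.sum_add_distrib, ← Finset.mul_sum]
          simp [mul_comm]
      _ ≤ (k : ℤ) * n + 2 * S := by linarith
  have hkR : (0 : ℝ) < (k : ℝ) := by exact_mod_cast hk
  have hcast : (k : ℝ) * ((f i : ℤ) : ℝ) ≤ (k : ℝ) * (n : ℝ) + 2 * ((S : ℤ) : ℝ) := by
    have := h1.trans h2
    exact_mod_cast this
  have hSe : ∑ e ∈ E, ((spanE cl a z e.1 e.2 : ℤ) : ℝ) = ((S : ℤ) : ℝ) := by
    rw [hS]; push_cast; ring
  rw [hSe]
  have e1 : (k : ℝ) * ((n : ℝ) + 2 * ((S : ℤ) : ℝ) / (k : ℝ))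
      = (k : ℝ) * (n : ℝ) + 2 * ((S : ℤ) : ℝ) := by
    field_simp
  have h3 : (k : ℝ) * ((f i : ℤ) : ℝ) ≤ (k : ℝ) * ((n : ℝ) + 2 * ((S : ℤ) : ℝ) / (k : ℝ)) := by
    rw [e1]; exact hcast
  exact le_of_mul_le_mul_left h3 hkR
end

section
/- Let H = (L,R,E) be a directed bipartite graph with regular edges from L to R and special edges from R to L, each vertex incident to at most one special edge. Let v ∈ R, n = |V(H)|, and d ≥ 2^{11} log n. If for every even index i with 1 < i ≤ d−1 one has |E(S_i, V∖S_i)| > (64 log n / d)·|S_i|, where S_i is the ball of radius i around v, then |S_{d-1}| > n, a contradiction; hence some even index i ≤ d−1 satisfies |E(S_i, V∖S_i)| ≤ (64 log n / d)·|S_i|. -/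
open scoped Classical

/-- `hasWalk E k x y` means there is a directed walk with exactly `k` edges from
`x` to `y` in the directed graph with edge set `E`. -/
def hasWalk {V : Type*} (E : Finset (V × V)) : ℕ → V → V → Prop
  | 0, x, y => x = y
  | n + 1, x, y => ∃ z, (x, z) ∈ E ∧ hasWalk E n z y

lemma hasWalk_snoc {V : Type*} (E : Finset (V × V)) :
    ∀ (k : ℕ) (x y z : V), hasWalk E k x y → (y, z) ∈ E → hasWalk E (k + 1) x z := by
  intro k
  induction k with
  | zero =>
    intro x y z h he
    have hxy : x = y := h
    subst hxy
    exact ⟨z, he, rfl⟩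
  | succ m ih =>
    intro x y z h he
    obtain ⟨w, hw, h2⟩ := h
    exact ⟨w, hw, ih w y z h2 he⟩

lemma hasWalk_parity {V : Type*} (E : Finset (V × V)) (L R : Finset V)
    (hLR : Disjoint L R)
    (hbip : ∀ e ∈ E, (e.1 ∈ L ∧ e.2 ∈ R) ∨ (e.1 ∈ R ∧ e.2 ∈ L)) :
    ∀ (k : ℕ) (x u : V), hasWalk E k x u →
      (x ∈ R → if Even k then u ∈ R else u ∈ L) ∧
      (x ∈ L → if Even k then u ∈ L else u ∈ R) := by
  intro k
  induction k with
  | zero =>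
    intro x u h
    have hxu : x = u := h
    subst hxu
    simp
  | succ m ih =>
    intro x u h
    obtain ⟨z, hz, hw⟩ := h
    have hdL : ∀ a, a ∈ L → a ∉ R := fun a ha => Finset.disjoint_left.1 hLR ha
    have hparity : Even (m + 1) ↔ ¬ Even m := Nat.even_add_one
    constructor
    · intro hx
      have hzL : z ∈ L := by
        rcases hbip (x, z) hz with ⟨h1, _⟩ | ⟨_, h2⟩
        · exact absurd hx (hdL x h1)
        · exact h2
      have hih := (ih z u hw).2 hzL
      by_cases hm : Even m <;> simp [Nat.even_add_one, hm] at hih ⊢ <;> exact hih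
    · intro hx
      have hzR : z ∈ R := by
        rcases hbip (x, z) hz with ⟨_, h2⟩ | ⟨h1, _⟩
        · exact h2
        · exact absurd h1 (hdL x hx)
      have hih := (ih z u hw).1 hzR
      by_cases hm : Even m <;> simp [Nat.even_add_one, hm] at hih ⊢ <;> exact hih

/-- Let `H = (L,R,E)` be a directed bipartite graph with regular edges from `L` to `R`
and special edges from `R` to `L`, each vertex incident to at most one special edge.
Let `v ∈ R`, `n = |V(H)|`, and `d ≥ 2^{11} log n`. Then some even index `i` with
`1 < i ≤ d−1` satisfies `|E(S_i, V∖S_i)| ≤ (64 log n / d)·|S_i|`, where `S_i` is the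
ball of radius `i` around `v` (otherwise `|S_{d-1}| > n`, a contradiction). -/
theorem stmt13 {V : Type*} [Fintype V] (E : Finset (V × V)) (L R : Finset V)
    (hLR : Disjoint L R)
    (hbip : ∀ e ∈ E, (e.1 ∈ L ∧ e.2 ∈ R) ∨ (e.1 ∈ R ∧ e.2 ∈ L))
    (hspec : ∀ w : V,
      (E.filter (fun e => (e.1 ∈ R ∧ e.2 ∈ L) ∧ (e.1 = w ∨ e.2 = w))).card ≤ 1)
    (v : V) (hv : v ∈ R) (n d : ℕ)
    (hn : n = Fintype.card V) (hn2 : 2 ≤ n)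
    (hd : (2 : ℝ) ^ 11 * Real.logb 2 (n : ℝ) ≤ (d : ℝ))
    (S : ℕ → Finset V)
    (hS : ∀ i, S i = Finset.univ.filter (fun u => ∃ k ≤ i, hasWalk E k v u)) :
    ∃ i, Even i ∧ 1 < i ∧ i ≤ d - 1 ∧
      ((E.filter (fun e => e.1 ∈ S i ∧ e.2 ∉ S i)).card : ℝ) ≤
        (64 * Real.logb 2 (n : ℝ) / (d : ℝ)) * ((S i).card : ℝ) := by
  by_contra hcon
  push_neg at hcon
  set Lg := Real.logb 2 (n : ℝ) with hLg
  have hL1 : (1 : ℝ) ≤ Lg := by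
    rw [hLg, show (1 : ℝ) = Real.logb 2 2 from (Real.logb_self_eq_one (by norm_num)).symm]
    exact Real.logb_le_logb_of_le (by norm_num) (by norm_num) (by exact_mod_cast hn2)
  have hd2048 : (2048 : ℝ) ≤ (d : ℝ) := le_trans (by nlinarith) hd
  have hdn : (2048 : ℕ) ≤ d := by exact_mod_cast hd2048
  have hdpos : (0 : ℝ) < d := by linarith
  set c := 64 * Lg / (d : ℝ) with hc
  have hc_pos : 0 < c := by
    apply div_pos (by linarith) hdpos
  have hcd : c * d = 64 * Lg := by
    rw [hc]; field_simp
  have hc_le : c ≤ 1 / 32 := by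
    rw [hc, div_le_iff₀ hdpos]
    nlinarith [hd]
  -- basic facts about S
  have hmem : ∀ i u, u ∈ S i ↔ ∃ k ≤ i, hasWalk E k v u := by
    intro i u; rw [hS i]; simp
  have hvS : ∀ i, v ∈ S i := fun i => (hmem i v).2 ⟨0, Nat.zero_le _, rfl⟩
  have hmono : ∀ i j, i ≤ j → S i ⊆ S j := by
    intro i j hij u hu
    obtain ⟨k, hk, hw⟩ := (hmem i u).1 hu
    exact (hmem j u).2 ⟨k, le_trans hk hij, hw⟩
  have hcard_n : ∀ i, ((S i).card : ℝ) ≤ (n : ℝ) := by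
    intro i
    have := Finset.card_le_univ (S i)
    rw [hn]
    exact_mod_cast this
  -- edges leaving S i (for even i) are special
  have hspecial : ∀ i, Even i → ∀ e ∈ E.filter (fun e => e.1 ∈ S i ∧ e.2 ∉ S i),
      e.1 ∈ R ∧ e.2 ∈ L := by
    intro i hi e he
    rw [Finset.mem_filter] at he
    obtain ⟨heE, h1, h2⟩ := he
    obtain ⟨k, hk, hw⟩ := (hmem i e.1).1 h1
    rcases hbip e heE with ⟨hL1', hR2⟩ | hsp
    · exfalso
      have hpar := (hasWalk_parity E L R hLR hbip k v e.1 hw).1 hv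
      have hkodd : ¬ Even k := by
        intro hke
        rw [if_pos hke] at hpar
        exact Finset.disjoint_left.1 hLR hL1' hpar
      have hklt : k + 1 ≤ i := by
        rcases hi with ⟨m, hm⟩
        rcases (Nat.odd_iff).1 (Nat.not_even_iff_odd.1 hkodd) with h
        omega
      have : hasWalk E (k + 1) v e.2 := hasWalk_snoc E k v e.1 e.2 hw (by
        have : (e.1, e.2) = e := rfl
        rw [this]; exact heE)
      exact h2 ((hmem i e.2).2 ⟨k + 1, hklt, this⟩)
    · exact hsp
  -- key counting: cut size bounded by growth
  have key : ∀ i, Even i →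
      (E.filter (fun e => e.1 ∈ S i ∧ e.2 ∉ S i)).card ≤ (S (i + 2) \ S i).card := by
    intro i hi
    apply Finset.card_le_card_of_injOn (fun e => e.2)
    · intro e he
      rw [Finset.mem_coe, Finset.mem_filter] at he
      obtain ⟨heE, h1, h2⟩ := he
      rw [Finset.mem_coe, Finset.mem_sdiff]
      refine ⟨?_, h2⟩
      obtain ⟨k, hk, hw⟩ := (hmem i e.1).1 h1
      have : hasWalk E (k + 1) v e.2 := hasWalk_snoc E k v e.1 e.2 hw (by
        have : (e.1, e.2) = e := rfl
        rw [this]; exact heE)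
      exact (hmem (i + 2) e.2).2 ⟨k + 1, by omega, this⟩
    · intro e he e' he' heq
      simp only at heq
      have hse := hspecial i hi e he
      have hse' := hspecial i hi e' he'
      rw [Finset.mem_coe, Finset.mem_filter] at he he'
      have hmem1 : e ∈ E.filter (fun f => (f.1 ∈ R ∧ f.2 ∈ L) ∧ (f.1 = e.2 ∨ f.2 = e.2)) := by
        rw [Finset.mem_filter]
        exact ⟨he.1, hse, Or.inr rfl⟩
      have hmem2 : e' ∈ E.filter (fun f => (f.1 ∈ R ∧ f.2 ∈ L) ∧ (f.1 = e.2 ∨ f.2 = e.2)) := by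
        rw [Finset.mem_filter]
        exact ⟨he'.1, hse', Or.inr heq.symm⟩
      exact (Finset.card_le_one.1 (hspec e.2) e hmem1 e' hmem2)
  -- growth estimate
  have grow1 : ∀ i, Even i → 1 < i → i ≤ d - 1 →
      (1 + c) * ((S i).card : ℝ) ≤ ((S (i + 2)).card : ℝ) := by
    intro i hi h1 h2
    have h3 := hcon i hi h1 h2
    have h4 : ((E.filter (fun e => e.1 ∈ S i ∧ e.2 ∉ S i)).card : ℝ) ≤
        ((S (i + 2) \ S i).card : ℝ) := by exact_mod_cast key i hi
    have h5 : (S (i + 2) \ S i).card + (S i).card = (S (i + 2)).card :=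
      Finset.card_sdiff_add_card_eq_card (hmono i (i + 2) (by omega))
    have h5' : ((S (i + 2) \ S i).card : ℝ) + ((S i).card : ℝ) = ((S (i + 2)).card : ℝ) := by
      exact_mod_cast h5
    have hcut : c * ((S i).card : ℝ) < ((E.filter (fun e => e.1 ∈ S i ∧ e.2 ∉ S i)).card : ℝ) := by
      rw [hc, hLg]; exact h3
    nlinarith
  -- iterate
  have grow : ∀ t : ℕ, 2 * t + 2 ≤ d → (1 + c) ^ t ≤ ((S (2 * t + 2)).card : ℝ) := by
    intro t
    induction t with
    | zero =>
      intro _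
      have h1 : 1 ≤ (S 2).card := Finset.card_pos.2 ⟨v, hvS 2⟩
      simpa using (by exact_mod_cast h1 : (1 : ℝ) ≤ ((S (2 * 0 + 2)).card : ℝ))
    | succ t ih =>
      intro h
      have h1 : 2 * t + 2 ≤ d - 1 := by omega
      have h2 := grow1 (2 * t + 2) ⟨t + 1, by ring⟩ (by omega) h1
      have h3 := ih (by omega)
      have heq : 2 * (t + 1) + 2 = (2 * t + 2) + 2 := by ring
      rw [heq, pow_succ]
      calc (1 + c) ^ t * (1 + c) ≤ ((S (2 * t + 2)).card : ℝ) * (1 + c) := by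
            apply mul_le_mul_of_nonneg_right h3 (by linarith)
        _ = (1 + c) * ((S (2 * t + 2)).card : ℝ) := mul_comm _ _
        _ ≤ _ := h2
  -- final contradiction
  set t := (d - 2) / 2 with ht
  have ht1 : 2 * t + 2 ≤ d := by omega
  have ht2 : (d : ℝ) - 3 ≤ 2 * (t : ℝ) := by
    have : d - 3 ≤ 2 * t := by omega
    have h := (Nat.cast_le (α := ℝ)).2 this
    push_cast at h
    have h3 : (d : ℝ) - 3 ≤ ((d - 3 : ℕ) : ℝ) := by
      push_cast [Nat.cast_sub (by omega : 3 ≤ d)]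
      linarith
    calc (d : ℝ) - 3 ≤ ((d - 3 : ℕ) : ℝ) := h3
      _ ≤ 2 * (t : ℝ) := by exact_mod_cast (Nat.cast_le (α := ℝ)).2 this
  have hfin := grow t ht1
  have hle : (1 + c) ^ t ≤ (n : ℝ) := le_trans hfin (hcard_n _)
  -- lower bound on log (1+c)
  have hlb : c / 2 ≤ Real.log (1 + c) := by
    have h1 : (0 : ℝ) < 1 + c := by linarith
    have h2 : 1 - (1 + c)⁻¹ ≤ Real.log (1 + c) := Real.one_sub_inv_le_log_of_pos h1
    have h3 : c / 2 ≤ 1 - (1 + c)⁻¹ := by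
      rw [inv_eq_one_div]
      have heq : 1 - 1 / (1 + c) = c / (1 + c) := by field_simp; ring
      rw [heq, div_le_div_iff₀ (by norm_num) h1]
      nlinarith
    linarith
  have hlogn : Real.log (n : ℝ) ≤ Lg := by
    have hlog2 : Real.log 2 ≤ 1 := by
      have := Real.log_le_sub_one_of_pos (by norm_num : (0:ℝ) < 2)
      linarith
    have hlog2pos : (0 : ℝ) < Real.log 2 := Real.log_pos (by norm_num)
    have : Lg * Real.log 2 = Real.log (n : ℝ) := by
      rw [hLg, Real.logb]
      field_simp
    have hn1 : (1:ℝ) ≤ (n:ℝ) := by exact_mod_cast (by omega : 1 ≤ n)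
    nlinarith [Real.log_nonneg hn1]
  have htpos : (0 : ℝ) ≤ (t : ℝ) := Nat.cast_nonneg t
  have hlt : (n : ℝ) < (1 + c) ^ t := by
    have hnpos : (0 : ℝ) < (n : ℝ) := by
      have : (2 : ℝ) ≤ (n : ℝ) := by exact_mod_cast hn2
      linarith
    have hppos : (0 : ℝ) < (1 + c) ^ t := by positivity
    rw [← Real.log_lt_log_iff hnpos hppos, Real.log_pow]
    have hkey : 15 * Lg ≤ (t : ℝ) * (c / 2) := by
      have h1 : ((d : ℝ) - 3) * c ≤ 2 * (t : ℝ) * c :=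
        mul_le_mul_of_nonneg_right ht2 hc_pos.le
      have h2 : ((d : ℝ) - 3) * c = 64 * Lg - 3 * c := by
        rw [sub_mul]
        rw [show (d:ℝ) * c = c * d from mul_comm _ _, hcd]
      nlinarith
    have h4 : (t : ℝ) * (c / 2) ≤ (t : ℝ) * Real.log (1 + c) :=
      mul_le_mul_of_nonneg_left hlb htpos
    linarith
  linarith
end

section
/- Let W be an n-vertex directed α₀-expander (for constant α₀ > 0), and suppose E* ⊆ E(W) with |E*| ≤ α₀·n/32. Suppose V(W) is partitioned into sets X_1,...,X_r, X_{r+1} such that for each j ≤ r, writing X'_j = X_{j+1} ∪ ... ∪ X_{r+1}, either |E_{W∖E*}(X_j, X'_j)| ≤ (α₀/2^{20})·|X_j| or |E_{W∖E*}(X'_j, X_j)| ≤ (α₀/2^{20})·|X_j|, and each |X_j| ≤ n/2. Then |X_{r+1}| ≥ n/4. -/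
open scoped Classical

set_option maxHeartbeats 1600000 in
/-- Let `W` be an `n`-vertex directed `α₀`-expander and `E* ⊆ E(W)` with
`|E*| ≤ α₀·n/32`. Suppose `V(W)` is partitioned into sets `X_1,...,X_r,X_{r+1}` such
that for each `j ≤ r`, writing `X'_j = X_{j+1} ∪ ... ∪ X_{r+1}`, either
`|E_{W∖E*}(X_j, X'_j)| ≤ (α₀/2^{20})·|X_j|` or
`|E_{W∖E*}(X'_j, X_j)| ≤ (α₀/2^{20})·|X_j|`, and each `|X_j| ≤ n/2`.
Then `|X_{r+1}| ≥ n/4`. -/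
theorem stmt14 {V : Type*} [Fintype V] [DecidableEq V] (W Estar : Finset (V × V))
    (α₀ : ℝ) (n r : ℕ)
    (hn : n = Fintype.card V) (hα : 0 < α₀)
    (hexp : ∀ A B : Finset V, A.Nonempty → B.Nonempty → Disjoint A B →
      A ∪ B = Finset.univ →
      α₀ * min (A.card : ℝ) (B.card : ℝ) ≤
        ((W.filter (fun e => e.1 ∈ A ∧ e.2 ∈ B)).card : ℝ))
    (hEstar : Estar ⊆ W) (hEstarCard : (Estar.card : ℝ) ≤ α₀ * (n : ℝ) / 32)
    (X : Fin (r + 1) → Finset V)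
    (hne : ∀ j, (X j).Nonempty)
    (hdisj : ∀ i j, i ≠ j → Disjoint (X i) (X j))
    (hcover : Finset.univ.biUnion X = Finset.univ)
    (hsize : ∀ j, ((X j).card : ℝ) ≤ (n : ℝ) / 2)
    (hsparse : ∀ j : Fin (r + 1), (j : ℕ) < r →
      ((((W \ Estar).filter (fun e => e.1 ∈ X j ∧
          e.2 ∈ (Finset.univ.filter (fun l : Fin (r + 1) => j < l)).biUnion X)).card : ℝ)
        ≤ α₀ / 2 ^ 20 * ((X j).card : ℝ)) ∨
      ((((W \ Estar).filter (fun e =>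
          e.1 ∈ (Finset.univ.filter (fun l : Fin (r + 1) => j < l)).biUnion X ∧
          e.2 ∈ X j)).card : ℝ) ≤ α₀ / 2 ^ 20 * ((X j).card : ℝ))) :
    (n : ℝ) / 4 ≤ ((X (Fin.last r)).card : ℝ) := by
  classical
  -- basic facts about the partition
  have hpart : ∀ v : V, ∃ l, v ∈ X l := by
    intro v
    have hv : v ∈ Finset.univ.biUnion X := by rw [hcover]; exact Finset.mem_univ v
    rcases Finset.mem_biUnion.mp hv with ⟨l, _, hl⟩
    exact ⟨l, hl⟩
  have huniq : ∀ {v : V} {a b : Fin (r + 1)}, v ∈ X a → v ∈ X b → a = b := by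
    intro v a b ha hb
    by_contra h
    exact Finset.disjoint_left.mp (hdisj a b h) ha hb
  have hnpos : 0 < n := by
    rcases hne (Fin.last r) with ⟨v, -⟩
    rw [hn]
    exact Fintype.card_pos_iff.mpr ⟨v⟩
  by_contra hcon
  push_neg at hcon
  have hconN : 4 * (X (Fin.last r)).card < n := by
    by_contra hc
    push_neg at hc
    have : (n : ℝ) ≤ 4 * ((X (Fin.last r)).card : ℝ) := by exact_mod_cast hc
    linarith
  rcases Nat.eq_zero_or_pos r with hr | hr
  · -- r = 0 : the single part is everything
    subst hr
    have hX0 : X (Fin.last 0) = Finset.univ := by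
      rw [← hcover]
      apply Finset.ext
      intro v
      constructor
      · intro h
        exact Finset.mem_biUnion.mpr ⟨Fin.last 0, Finset.mem_univ _, h⟩
      · intro h
        rcases Finset.mem_biUnion.mp h with ⟨l, -, hl⟩
        have hl0 : l = Fin.last 0 := by
          apply Fin.ext
          have := l.isLt
          show (l : ℕ) = 0
          omega
        rwa [hl0] at hl
    rw [hX0, Finset.card_univ, ← hn] at hconN
    omega
  -- main case : r ≥ 1
  have hsizeN : ∀ j, 2 * (X j).card ≤ n := by
    intro j
    have h := hsize j
    have : (2 * (X j).card : ℝ) ≤ (n : ℝ) := by push_cast; linarith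
    exact_mod_cast this
  -- sum of part sizes is at most n
  have hsumcard : ∀ s : Finset (Fin (r + 1)), ∑ j ∈ s, (X j).card ≤ n := by
    intro s
    rw [← Finset.card_biUnion (fun x _ y _ h => hdisj x y h)]
    calc (s.biUnion X).card ≤ (Finset.univ : Finset V).card :=
          Finset.card_le_card (Finset.subset_univ _)
      _ = n := by rw [Finset.card_univ, hn]
  -- abbreviations
  set Xp : Fin (r + 1) → Finset V :=
    fun j => (Finset.univ.filter (fun l : Fin (r + 1) => j < l)).biUnion X with hXp
  set F : Fin (r + 1) → Finset (V × V) :=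
    fun j => (W \ Estar).filter (fun e => e.1 ∈ X j ∧ e.2 ∈ Xp j) with hF
  set Bk : Fin (r + 1) → Finset (V × V) :=
    fun j => (W \ Estar).filter (fun e => e.1 ∈ Xp j ∧ e.2 ∈ X j) with hBk
  set fwd : Fin (r + 1) → Prop :=
    fun j => ((F j).card : ℝ) ≤ α₀ / 2 ^ 20 * ((X j).card : ℝ) with hfwdDef
  set D : Fin (r + 1) → Finset (V × V) := fun j => if fwd j then F j else Bk j with hD
  have hsp : ∀ j : Fin (r + 1), (j : ℕ) < r →
      fwd j ∨ ((Bk j).card : ℝ) ≤ α₀ / 2 ^ 20 * ((X j).card : ℝ) := by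
    intro j hj
    simpa [hfwdDef, hF, hBk, hXp] using hsparse j hj
  have hDbound : ∀ j : Fin (r + 1), (j : ℕ) < r →
      ((D j).card : ℝ) ≤ α₀ / 2 ^ 20 * ((X j).card : ℝ) := by
    intro j hj
    by_cases h : fwd j
    · simp only [hD]; rw [if_pos h]; exact h
    · simp only [hD]; rw [if_neg h]
      rcases hsp j hj with h' | h'
      · exact absurd h' h
      · exact h'
  -- prefixes
  set P : Fin (r + 1) → Finset V :=
    fun m => (Finset.univ.filter (fun l : Fin (r + 1) => l ≤ m)).biUnion X with hPdef
  have hPcard : ∀ m, (P m).card =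
      ∑ j ∈ Finset.univ.filter (fun l : Fin (r + 1) => l ≤ m), (X j).card := by
    intro m
    exact Finset.card_biUnion (fun x _ y _ h => hdisj x y h)
  -- the set of candidate prefixes
  set S : Finset (Fin (r + 1)) :=
    Finset.univ.filter (fun m => n ≤ 4 * (P m).card) with hSdef
  have hlastS : Fin.last r ∈ S := by
    have hPlast : P (Fin.last r) = Finset.univ := by
      simp only [hPdef]
      have : Finset.univ.filter (fun l : Fin (r + 1) => l ≤ Fin.last r) = Finset.univ := by
        apply Finset.filter_true_of_mem
        intro l _
        exact Fin.le_last l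
      rw [this, hcover]
    rw [hSdef, Finset.mem_filter]
    refine ⟨Finset.mem_univ _, ?_⟩
    rw [hPlast, Finset.card_univ, ← hn]
    omega
  have hSne : S.Nonempty := ⟨_, hlastS⟩
  set k : Fin (r + 1) := S.min' hSne with hkdef
  have hkS : k ∈ S := Finset.min'_mem _ _
  have hkP : n ≤ 4 * (P k).card := by
    rw [hSdef, Finset.mem_filter] at hkS
    exact hkS.2
  -- the prefix through r-1 is big, so k < r
  have hj0S : (⟨r - 1, by omega⟩ : Fin (r + 1)) ∈ S := by
    set j₀ : Fin (r + 1) := ⟨r - 1, by omega⟩ with hj0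
    have hcov : X (Fin.last r) ∪ P j₀ = Finset.univ := by
      apply Finset.eq_univ_of_forall
      intro v
      rcases hpart v with ⟨l, hl⟩
      by_cases hll : l = Fin.last r
      · exact Finset.mem_union_left _ (hll ▸ hl)
      · refine Finset.mem_union_right _ ?_
        simp only [hPdef]
        refine Finset.mem_biUnion.mpr ⟨l, ?_, hl⟩
        refine Finset.mem_filter.mpr ⟨Finset.mem_univ _, ?_⟩
        have hlval : (l : ℕ) < r := by
          have := l.isLt
          rcases Nat.lt_or_ge (l : ℕ) r with h | h
          · exact h
          · exfalso; apply hll; apply Fin.ext; simp [Fin.last]; omega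
        show l ≤ j₀
        rw [Fin.le_def]
        simp [hj0]
        omega
    have hle : n ≤ (X (Fin.last r)).card + (P j₀).card := by
      calc n = (Finset.univ : Finset V).card := by rw [Finset.card_univ, hn]
        _ = (X (Fin.last r) ∪ P j₀).card := by rw [hcov]
        _ ≤ (X (Fin.last r)).card + (P j₀).card := Finset.card_union_le _ _
    rw [hSdef, Finset.mem_filter]
    exact ⟨Finset.mem_univ _, by omega⟩
  have hkr : (k : ℕ) < r := by
    have := Finset.min'_le S _ hj0S
    rw [← hkdef] at this
    rw [Fin.le_def] at this
    simp at this
    omega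
  -- minimality of k
  have hmin : ∀ m : Fin (r + 1), m < k → 4 * (P m).card < n := by
    intro m hm
    by_contra h
    push_neg at h
    have hmS : m ∈ S := by
      rw [hSdef, Finset.mem_filter]; exact ⟨Finset.mem_univ _, h⟩
    have := Finset.min'_le S _ hmS
    rw [← hkdef] at this
    exact absurd (lt_of_le_of_lt this hm) (lt_irrefl _)
  -- upper bound on the prefix
  have hub : 4 * (P k).card ≤ 3 * n := by
    by_cases hk0 : (k : ℕ) = 0
    · have hfil : Finset.univ.filter (fun l : Fin (r + 1) => l ≤ k) = {k} := by
        apply Finset.ext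
        intro l
        simp only [Finset.mem_filter, Finset.mem_univ, true_and, Finset.mem_singleton]
        rw [Fin.le_def]
        constructor
        · intro h; apply Fin.ext; omega
        · intro h; rw [h]
      have : (P k).card = (X k).card := by
        simp only [hPdef]; simp only [hfil, Finset.singleton_biUnion]
      have := hsizeN k
      omega
    · set k' : Fin (r + 1) := ⟨(k : ℕ) - 1, by omega⟩ with hk'def
      have hfil : Finset.univ.filter (fun l : Fin (r + 1) => l ≤ k) =
          insert k (Finset.univ.filter (fun l : Fin (r + 1) => l ≤ k')) := by
        apply Finset.ext
        intro l
        simp only [Finset.mem_filter, Finset.mem_univ, true_and, Finset.mem_insert]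
        rw [Fin.le_def, Fin.le_def]
        constructor
        · intro h
          rcases Nat.lt_or_ge (l : ℕ) (k : ℕ) with h' | h'
          · right; simp [hk'def]; omega
          · left; apply Fin.ext; omega
        · intro h
          rcases h with h | h
          · rw [h]
          · simp [hk'def] at h; omega
      have hPk : P k ⊆ X k ∪ P k' := by
        simp only [hPdef]
        simp only [hfil, Finset.biUnion_insert]
        exact Finset.Subset.refl _
      have h1 : (P k).card ≤ (X k).card + (P k').card :=
        le_trans (Finset.card_le_card hPk) (Finset.card_union_le _ _)
      have hk'k : k' < k := by rw [Fin.lt_def]; show (k : ℕ) - 1 < (k : ℕ); omega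
      have h2 := hmin k' hk'k
      have h3 := hsizeN k
      omega
  have hPk_le : (P k).card ≤ n := by
    rw [hn]
    exact le_trans (Finset.card_le_card (Finset.subset_univ _)) (le_of_eq Finset.card_univ)
  have hcompl : n ≤ 4 * ((P k)ᶜ : Finset V).card := by
    rw [Finset.card_compl, ← hn]
    omega
  -- the two sides
  set A1 : Finset V :=
    (Finset.univ.filter (fun j : Fin (r + 1) => j ≤ k ∧ fwd j)).biUnion X with hA1def
  set A2 : Finset V :=
    (Finset.univ.filter (fun j : Fin (r + 1) => j ≤ k ∧ ¬ fwd j)).biUnion X with hA2def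
  have hA1sub : A1 ⊆ P k := by
    rw [hA1def, hPdef]
    apply Finset.biUnion_subset_biUnion_of_subset_left
    intro j hj
    rw [Finset.mem_filter] at hj ⊢
    exact ⟨hj.1, hj.2.1⟩
  have hA2sub : A2 ⊆ P k := by
    rw [hA2def, hPdef]
    apply Finset.biUnion_subset_biUnion_of_subset_left
    intro j hj
    rw [Finset.mem_filter] at hj ⊢
    exact ⟨hj.1, hj.2.1⟩
  have hA1card : A1.card =
      ∑ j ∈ Finset.univ.filter (fun j : Fin (r + 1) => j ≤ k ∧ fwd j), (X j).card :=
    Finset.card_biUnion (fun x _ y _ h => hdisj x y h)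
  have hA2card : A2.card =
      ∑ j ∈ Finset.univ.filter (fun j : Fin (r + 1) => j ≤ k ∧ ¬ fwd j), (X j).card :=
    Finset.card_biUnion (fun x _ y _ h => hdisj x y h)
  have hsplitsum : A1.card + A2.card = (P k).card := by
    rw [hA1card, hA2card, hPcard]
    have e1 : Finset.univ.filter (fun j : Fin (r + 1) => j ≤ k ∧ fwd j) =
        (Finset.univ.filter (fun l : Fin (r + 1) => l ≤ k)).filter fwd := by
      rw [Finset.filter_filter]
    have e2 : Finset.univ.filter (fun j : Fin (r + 1) => j ≤ k ∧ ¬ fwd j) =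
        (Finset.univ.filter (fun l : Fin (r + 1) => l ≤ k)).filter (fun j => ¬ fwd j) := by
      rw [Finset.filter_filter]
    rw [e1, e2]
    exact Finset.sum_filter_add_sum_filter_not _ _ _
  -- counting crossing edges
  have hcount : ∀ C : Finset (V × V),
      C ⊆ (Finset.univ.filter (fun j : Fin (r + 1) => j ≤ k)).biUnion D →
      (C.card : ℝ) ≤ α₀ / 2 ^ 20 * (n : ℝ) := by
    intro C hC
    have h1 : C.card ≤ ∑ j ∈ Finset.univ.filter (fun j : Fin (r + 1) => j ≤ k), (D j).card :=
      le_trans (Finset.card_le_card hC) (Finset.card_biUnion_le)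
    have h2 : ((∑ j ∈ Finset.univ.filter (fun j : Fin (r + 1) => j ≤ k), (D j).card : ℕ) : ℝ)
        ≤ ∑ j ∈ Finset.univ.filter (fun j : Fin (r + 1) => j ≤ k),
            (α₀ / 2 ^ 20 * ((X j).card : ℝ)) := by
      push_cast
      apply Finset.sum_le_sum
      intro j hj
      rw [Finset.mem_filter] at hj
      have : (j : ℕ) < r := lt_of_le_of_lt (Fin.le_def.mp hj.2) hkr
      exact hDbound j this
    have h3 : ∑ j ∈ Finset.univ.filter (fun j : Fin (r + 1) => j ≤ k),
        (α₀ / 2 ^ 20 * ((X j).card : ℝ)) =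
        α₀ / 2 ^ 20 * ∑ j ∈ Finset.univ.filter (fun j : Fin (r + 1) => j ≤ k),
          ((X j).card : ℝ) := by
      rw [Finset.mul_sum]
    have h4 : ∑ j ∈ Finset.univ.filter (fun j : Fin (r + 1) => j ≤ k), ((X j).card : ℝ)
        ≤ (n : ℝ) := by
      have := hsumcard (Finset.univ.filter (fun j : Fin (r + 1) => j ≤ k))
      push_cast
      exact_mod_cast this
    have h5 : (0 : ℝ) ≤ α₀ / 2 ^ 20 := by positivity
    calc (C.card : ℝ) ≤ _ := by exact_mod_cast h1
      _ ≤ _ := h2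
      _ = _ := h3
      _ ≤ α₀ / 2 ^ 20 * (n : ℝ) := by
          apply mul_le_mul_of_nonneg_left h4 h5
  -- the generic contradiction
  have hfinish : ∀ A B : Finset V, A.Nonempty → B.Nonempty → Disjoint A B →
      A ∪ B = Finset.univ → n ≤ 8 * A.card → n ≤ 8 * B.card →
      ((W \ Estar).filter (fun e => e.1 ∈ A ∧ e.2 ∈ B)) ⊆
        (Finset.univ.filter (fun j : Fin (r + 1) => j ≤ k)).biUnion D → False := by
    intro A B hA hB hdAB hUAB h8A h8B hsub
    have hmain := hexp A B hA hB hdAB hUAB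
    have hsplit : W.filter (fun e => e.1 ∈ A ∧ e.2 ∈ B) ⊆
        Estar ∪ (W \ Estar).filter (fun e => e.1 ∈ A ∧ e.2 ∈ B) := by
      intro e he
      rw [Finset.mem_filter] at he
      by_cases h : e ∈ Estar
      · exact Finset.mem_union_left _ h
      · exact Finset.mem_union_right _
          (Finset.mem_filter.mpr ⟨Finset.mem_sdiff.mpr ⟨he.1, h⟩, he.2⟩)
    have hcard1 : (W.filter (fun e => e.1 ∈ A ∧ e.2 ∈ B)).card ≤
        Estar.card + ((W \ Estar).filter (fun e => e.1 ∈ A ∧ e.2 ∈ B)).card :=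
      le_trans (Finset.card_le_card hsplit) (Finset.card_union_le _ _)
    have hcard1' : ((W.filter (fun e => e.1 ∈ A ∧ e.2 ∈ B)).card : ℝ) ≤
        (Estar.card : ℝ) + (((W \ Estar).filter (fun e => e.1 ∈ A ∧ e.2 ∈ B)).card : ℝ) := by
      exact_mod_cast hcard1
    have hC := hcount _ hsub
    have h8A' : (n : ℝ) ≤ 8 * (A.card : ℝ) := by exact_mod_cast h8A
    have h8B' : (n : ℝ) ≤ 8 * (B.card : ℝ) := by exact_mod_cast h8B
    have hminAB : (n : ℝ) / 8 ≤ min (A.card : ℝ) (B.card : ℝ) := by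
      apply le_min <;> linarith
    have hchain : α₀ * ((n : ℝ) / 8) ≤ α₀ * (n : ℝ) / 32 + α₀ / 2 ^ 20 * (n : ℝ) := by
      have := mul_le_mul_of_nonneg_left hminAB hα.le
      linarith
    have h2p : (2 : ℝ) ^ 20 = 1048576 := by norm_num
    rw [h2p] at hchain
    have hprod : 0 < α₀ * (n : ℝ) := by
      apply mul_pos hα
      exact_mod_cast hnpos
    have : α₀ / 1048576 * (n : ℝ) = α₀ * (n : ℝ) / 1048576 := by ring
    rw [this] at hchain
    nlinarith
  -- X (last) avoids P k
  have hlast_not : ∀ v ∈ X (Fin.last r), v ∉ P k := by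
    intro v hv hvP
    simp only [hPdef] at hvP
    rcases Finset.mem_biUnion.mp hvP with ⟨l, hl, hvl⟩
    rw [Finset.mem_filter] at hl
    have : l = Fin.last r := huniq hvl hv
    rw [this] at hl
    have := Fin.le_def.mp hl.2
    simp [Fin.last] at this
    omega
  -- crossing edges from A1 are covered
  have hC1 : (W \ Estar).filter (fun e => e.1 ∈ A1 ∧ e.2 ∈ A1ᶜ) ⊆
      (Finset.univ.filter (fun j : Fin (r + 1) => j ≤ k)).biUnion D := by
    intro e he
    rw [Finset.mem_filter] at he
    obtain ⟨heW, h1, h2⟩ := he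
    simp only [hA1def] at h1
    rcases Finset.mem_biUnion.mp h1 with ⟨a, ha, hua⟩
    rw [Finset.mem_filter] at ha
    obtain ⟨-, hak, hafwd⟩ := ha
    rcases hpart e.2 with ⟨b, hvb⟩
    have hnb : e.2 ∉ A1 := Finset.mem_compl.mp h2
    have hab : a ≠ b := by
      rintro rfl
      exact hnb (by
        simp only [hA1def]
        exact Finset.mem_biUnion.mpr
          ⟨a, Finset.mem_filter.mpr ⟨Finset.mem_univ _, hak, hafwd⟩, hvb⟩)
    rcases lt_or_gt_of_ne hab with hlt | hgt
    · refine Finset.mem_biUnion.mpr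
        ⟨a, Finset.mem_filter.mpr ⟨Finset.mem_univ _, hak⟩, ?_⟩
      have hmem : e ∈ F a := by
        simp only [hF]
        refine Finset.mem_filter.mpr ⟨heW, hua, ?_⟩
        simp only [hXp]
        exact Finset.mem_biUnion.mpr
          ⟨b, Finset.mem_filter.mpr ⟨Finset.mem_univ _, hlt⟩, hvb⟩
      simp only [hD]; rw [if_pos hafwd]; exact hmem
    · have hbk : b ≤ k := le_trans (le_of_lt hgt) hak
      have hbnf : ¬ fwd b := by
        intro hf
        exact hnb (by
          simp only [hA1def]
          exact Finset.mem_biUnion.mpr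
            ⟨b, Finset.mem_filter.mpr ⟨Finset.mem_univ _, hbk, hf⟩, hvb⟩)
      refine Finset.mem_biUnion.mpr
        ⟨b, Finset.mem_filter.mpr ⟨Finset.mem_univ _, hbk⟩, ?_⟩
      have hmem : e ∈ Bk b := by
        simp only [hBk]
        refine Finset.mem_filter.mpr ⟨heW, ?_, hvb⟩
        simp only [hXp]
        exact Finset.mem_biUnion.mpr
          ⟨a, Finset.mem_filter.mpr ⟨Finset.mem_univ _, hgt⟩, hua⟩
      simp only [hD]; rw [if_neg hbnf]; exact hmem
  -- crossing edges into A2 are covered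
  have hC2 : (W \ Estar).filter (fun e => e.1 ∈ A2ᶜ ∧ e.2 ∈ A2) ⊆
      (Finset.univ.filter (fun j : Fin (r + 1) => j ≤ k)).biUnion D := by
    intro e he
    rw [Finset.mem_filter] at he
    obtain ⟨heW, h1, h2⟩ := he
    simp only [hA2def] at h2
    rcases Finset.mem_biUnion.mp h2 with ⟨b, hb, hvb⟩
    rw [Finset.mem_filter] at hb
    obtain ⟨-, hbk, hbnf⟩ := hb
    rcases hpart e.1 with ⟨a, hua⟩
    have hna : e.1 ∉ A2 := Finset.mem_compl.mp h1
    have hab : a ≠ b := by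
      rintro rfl
      exact hna (by
        simp only [hA2def]
        exact Finset.mem_biUnion.mpr
          ⟨a, Finset.mem_filter.mpr ⟨Finset.mem_univ _, hbk, hbnf⟩, hua⟩)
    rcases lt_or_gt_of_ne hab with hlt | hgt
    · -- a < b : a is forward, edge lies in F a
      have hak : a ≤ k := le_trans (le_of_lt hlt) hbk
      have haf : fwd a := by
        by_contra hf
        exact hna (by
          simp only [hA2def]
          exact Finset.mem_biUnion.mpr
            ⟨a, Finset.mem_filter.mpr ⟨Finset.mem_univ _, hak, hf⟩, hua⟩)
      refine Finset.mem_biUnion.mpr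
        ⟨a, Finset.mem_filter.mpr ⟨Finset.mem_univ _, hak⟩, ?_⟩
      have hmem : e ∈ F a := by
        simp only [hF]
        refine Finset.mem_filter.mpr ⟨heW, hua, ?_⟩
        simp only [hXp]
        exact Finset.mem_biUnion.mpr
          ⟨b, Finset.mem_filter.mpr ⟨Finset.mem_univ _, hlt⟩, hvb⟩
      simp only [hD]; rw [if_pos haf]; exact hmem
    · -- b < a : edge lies in Bk b
      refine Finset.mem_biUnion.mpr
        ⟨b, Finset.mem_filter.mpr ⟨Finset.mem_univ _, hbk⟩, ?_⟩
      have hmem : e ∈ Bk b := by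
        simp only [hBk]
        refine Finset.mem_filter.mpr ⟨heW, ?_, hvb⟩
        simp only [hXp]
        exact Finset.mem_biUnion.mpr
          ⟨a, Finset.mem_filter.mpr ⟨Finset.mem_univ _, hgt⟩, hua⟩
      simp only [hD]; rw [if_neg hbnf]; exact hmem
  -- compare the sizes of A1 and A2
  rcases le_total A2.card A1.card with hcase | hcase
  · -- A1 is the big side : cut (A1, A1ᶜ)
    have h8A1 : n ≤ 8 * A1.card := by omega
    have h8A1c : n ≤ 8 * (A1ᶜ : Finset V).card := by
      have hsubc : (P k)ᶜ ⊆ A1ᶜ := Finset.compl_subset_compl.mpr hA1sub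
      have := Finset.card_le_card hsubc
      omega
    have hA1ne : A1.Nonempty := by
      rw [← Finset.card_pos]; omega
    have hA1cne : (A1ᶜ : Finset V).Nonempty := by
      rw [← Finset.card_pos]; omega
    exact hfinish A1 A1ᶜ hA1ne hA1cne (disjoint_compl_right)
      (by ext v; simp [Finset.mem_union, Finset.mem_compl, em]) h8A1 h8A1c hC1
  · -- A2 is the big side : cut (A2ᶜ, A2)
    have h8A2 : n ≤ 8 * A2.card := by omega
    have h8A2c : n ≤ 8 * (A2ᶜ : Finset V).card := by
      have hsubc : (P k)ᶜ ⊆ A2ᶜ := Finset.compl_subset_compl.mpr hA2sub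
      have := Finset.card_le_card hsubc
      omega
    have hA2ne : A2.Nonempty := by
      rw [← Finset.card_pos]; omega
    have hA2cne : (A2ᶜ : Finset V).Nonempty := by
      rw [← Finset.card_pos]; omega
    have hdis2 : Disjoint (A2ᶜ : Finset V) A2 := disjoint_compl_left
    have hun2 : (A2ᶜ : Finset V) ∪ A2 = Finset.univ := by
      ext v; simp [Finset.mem_union, Finset.mem_compl, em, or_comm]
    exact hfinish A2ᶜ A2 hA2cne hA2ne hdis2 hun2 h8A2c h8A2 hC2
end

section
/- Let G' be a directed graph with a source s, sink t, and nonnegative rational edge lengths ℓ'(e) with Σ_e ℓ'(e) ≤ L and dist_{G'}(s,t) ≥ 1. Then there exists a threshold ρ ∈ (0,1) such that the cut (S,T) with S = {v : dist_{G'}(s,v) ≤ ρ} and T = V∖S satisfies s ∈ S, t ∈ T, and |E_{G'}(S,T)| ≤ L. -/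
open scoped Classical

private lemma edges_concat {V : Type*} (l : List V) (u v : V) (h : l.getLast? = some u) :
    ((l ++ [v]).zip (l ++ [v]).tail) = l.zip l.tail ++ [(u, v)] := by
  induction l with
  | nil => simp at h
  | cons a l ih =>
    cases l with
    | nil => simp_all
    | cons b l' =>
      rw [List.getLast?_cons_cons] at h
      simp only [List.cons_append, List.zip_cons_cons, List.tail_cons] at *
      rw [ih h]

/-- Let `G'` be a directed graph with a source `s`, sink `t`, and nonnegative edge
lengths `ℓ'(e)` with `Σ_e ℓ'(e) ≤ L` and `dist_{G'}(s,t) ≥ 1`. Then there exists a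
threshold `ρ ∈ (0,1)` such that the cut `(S,T)` with
`S = {v : dist_{G'}(s,v) ≤ ρ}` and `T = V∖S` satisfies `s ∈ S`, `t ∉ S`, and
`|E_{G'}(S,T)| ≤ L`. -/
theorem stmt16 {V : Type*} [Fintype V] (E : Finset (V × V)) (s t : V)
    (ℓ : V × V → ℝ) (L : ℝ)
    (hℓ : ∀ e, 0 ≤ ℓ e)
    (hsum : ∑ e ∈ E, ℓ e ≤ L)
    (hdist : ∀ p : List V, p.Chain' (fun a b => (a, b) ∈ E) → p.head? = some s →
      p.getLast? = some t → 1 ≤ ((p.zip p.tail).map ℓ).sum) :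
    ∃ ρ : ℝ, 0 < ρ ∧ ρ < 1 ∧ ∃ S : Set V,
      S = {v | ∃ p : List V, p.Chain' (fun a b => (a, b) ∈ E) ∧ p.head? = some s ∧
        p.getLast? = some v ∧ ((p.zip p.tail).map ℓ).sum ≤ ρ} ∧
      s ∈ S ∧ t ∉ S ∧
      ((E.filter (fun e => e.1 ∈ S ∧ e.2 ∉ S)).card : ℝ) ≤ L := by
  set S : ℝ → Set V := fun ρ => {v | ∃ p : List V, p.Chain' (fun a b => (a, b) ∈ E) ∧
    p.head? = some s ∧ p.getLast? = some v ∧ ((p.zip p.tail).map ℓ).sum ≤ ρ} with hS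
  have hmono : ∀ {ρ ρ' : ℝ}, ρ ≤ ρ' → S ρ ⊆ S ρ' := by
    rintro ρ ρ' h v ⟨p, h1, h2, h3, h4⟩
    exact ⟨p, h1, h2, h3, h4.trans h⟩
  have hsmem : ∀ {ρ : ℝ}, 0 ≤ ρ → s ∈ S ρ := by
    intro ρ hρ
    exact ⟨[s], List.isChain_singleton _, by simp, by simp, by simpa⟩
  have htmem : ∀ {ρ : ℝ}, ρ < 1 → t ∉ S ρ := by
    rintro ρ h ⟨p, h1, h2, h3, h4⟩
    exact absurd ((hdist p h1 h2 h3).trans h4) (not_le.2 h)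
  have hext : ∀ (u v : V), (u, v) ∈ E → ∀ ρ : ℝ, u ∈ S ρ → v ∈ S (ρ + ℓ (u, v)) := by
    rintro u v he ρ ⟨p, h1, h2, h3, h4⟩
    refine ⟨p ++ [v], ?_, ?_, List.getLast?_concat, ?_⟩
    · rw [List.Chain', List.isChain_append]
      refine ⟨h1, List.isChain_singleton _, ?_⟩
      intro x hx y hy
      simp only [List.head?_cons, Option.mem_def, Option.some.injEq] at hy
      rw [h3] at hx
      simp only [Option.mem_def, Option.some.injEq] at hx
      subst hx; subst hy; exact he
    · have hp : p ≠ [] := by rintro rfl; simp at h2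
      rw [List.head?_append, h2]; rfl
    · rw [edges_concat p u v h3, List.map_append, List.sum_append]
      simpa using add_le_add_right h4 (ℓ (u, v))
  set c : ℝ → ℕ := fun ρ => (E.filter (fun e => e.1 ∈ S ρ ∧ e.2 ∉ S ρ)).card with hc
  -- the minimum cut value over thresholds in (0,1)
  set M : Set ℕ := {n | ∃ ρ : ℝ, 0 < ρ ∧ ρ < 1 ∧ c ρ = n} with hM
  have hMne : M.Nonempty := ⟨c (1/2), 1/2, by norm_num, by norm_num, rfl⟩
  obtain ⟨ρ, hρ0, hρ1, hρc⟩ := Nat.sInf_mem hMne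
  have hmin : ∀ ρ' : ℝ, 0 < ρ' → ρ' < 1 → sInf M ≤ c ρ' := by
    intro ρ' h1 h2
    exact Nat.sInf_le ⟨ρ', h1, h2, rfl⟩
  have hLnn : (0:ℝ) ≤ L := le_trans (Finset.sum_nonneg fun e _ => hℓ e) hsum
  -- key averaging bound
  have key : ∀ N : ℕ, 2 ≤ N → ((N:ℝ) - 1) * sInf M ≤ N * L + E.card := by
    intro N hN2
    have hN0 : (0:ℝ) < N := by exact_mod_cast Nat.lt_of_lt_of_le two_pos hN2
    have step1 : ∑ _k ∈ Finset.Ioo 0 N, ((sInf M : ℕ) : ℝ) ≤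
        ∑ k ∈ Finset.Ioo 0 N, (c ((k:ℝ)/N) : ℝ) := by
      apply Finset.sum_le_sum
      intro k hk
      simp only [Finset.mem_Ioo] at hk
      have h1 : 0 < (k:ℝ)/N := div_pos (by exact_mod_cast hk.1) hN0
      have h2 : (k:ℝ)/N < 1 := (div_lt_one hN0).2 (by exact_mod_cast hk.2)
      exact_mod_cast hmin _ h1 h2
    have hcast : ∀ ρ : ℝ, (c ρ : ℝ) =
        ∑ e ∈ E, (if e.1 ∈ S ρ ∧ e.2 ∉ S ρ then (1:ℝ) else 0) := by
      intro ρ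
      rw [show c ρ = (E.filter (fun e => e.1 ∈ S ρ ∧ e.2 ∉ S ρ)).card from rfl,
        Finset.card_filter]
      push_cast
      rfl
    have step2 : ∑ k ∈ Finset.Ioo 0 N, (c ((k:ℝ)/N) : ℝ) ≤
        ∑ e ∈ E, ((N:ℝ) * ℓ e + 1) := by
      calc ∑ k ∈ Finset.Ioo 0 N, (c ((k:ℝ)/N) : ℝ)
          = ∑ k ∈ Finset.Ioo 0 N, ∑ e ∈ E,
            (if e.1 ∈ S ((k:ℝ)/N) ∧ e.2 ∉ S ((k:ℝ)/N) then (1:ℝ) else 0) := by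
            exact Finset.sum_congr rfl fun k _ => hcast _
        _ = ∑ e ∈ E, ∑ k ∈ Finset.Ioo 0 N,
            (if e.1 ∈ S ((k:ℝ)/N) ∧ e.2 ∉ S ((k:ℝ)/N) then (1:ℝ) else 0) :=
            Finset.sum_comm
        _ ≤ ∑ e ∈ E, ((N:ℝ) * ℓ e + 1) := by
            apply Finset.sum_le_sum
            intro e he
            rw [Finset.sum_boole]
            set K := (Finset.Ioo 0 N).filter
              (fun k : ℕ => e.1 ∈ S ((k:ℝ)/N) ∧ e.2 ∉ S ((k:ℝ)/N)) with hK
            have hℓe := hℓ e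
            rcases K.eq_empty_or_nonempty with h | h
            · rw [h]
              simp only [Finset.card_empty, Nat.cast_zero]
              nlinarith
            · set k0 := K.min' h with hk0def
              set k1 := K.max' h with hk1def
              have hk0 := Finset.mem_filter.1 (K.min'_mem h)
              have hk1 := Finset.mem_filter.1 (K.max'_mem h)
              have hlt : (k1:ℝ) - k0 < N * ℓ e := by
                by_contra hc2
                push_neg at hc2
                have h1 : e.1 ∈ S ((k0:ℝ)/N) := hk0.2.1
                have h2 : e.2 ∈ S ((k0:ℝ)/N + ℓ e) := by
                  have := hext e.1 e.2 (by simpa using he) _ h1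
                  simpa using this
                have h3' : (k0:ℝ)/N + ℓ e ≤ (k1:ℝ)/N := by
                  have heq : (k0:ℝ)/N + ℓ e = ((k0:ℝ) + ℓ e * N)/N := by
                    field_simp
                  rw [heq, div_le_div_iff_of_pos_right hN0]
                  nlinarith
                exact hk1.2.2 (hmono h3' h2)
              have hsub : K ⊆ Finset.Icc k0 k1 := by
                intro k hk
                exact Finset.mem_Icc.2 ⟨K.min'_le k hk, K.le_max' k hk⟩
              have hcard : K.card ≤ k1 + 1 - k0 := by
                rw [← Nat.card_Icc]
                exact Finset.card_le_card hsub
              have hk01 : k0 ≤ k1 := K.min'_le k1 (K.max'_mem h)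
              calc (K.card : ℝ) ≤ ((k1 + 1 - k0 : ℕ) : ℝ) := by exact_mod_cast hcard
                _ = (k1:ℝ) + 1 - k0 := by
                    rw [Nat.cast_sub (by omega)]
                    push_cast
                    ring
                _ ≤ (N:ℝ) * ℓ e + 1 := by linarith
    have step3 : ∑ e ∈ E, ((N:ℝ) * ℓ e + 1) ≤ (N:ℝ) * L + E.card := by
      rw [Finset.sum_add_distrib, ← Finset.mul_sum, Finset.sum_const, nsmul_eq_mul,
        mul_one]
      have : (N:ℝ) * ∑ e ∈ E, ℓ e ≤ (N:ℝ) * L :=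
        mul_le_mul_of_nonneg_left hsum hN0.le
      linarith
    have hcardIoo : ∑ _k ∈ Finset.Ioo 0 N, ((sInf M : ℕ) : ℝ) =
        ((N:ℝ) - 1) * sInf M := by
      rw [Finset.sum_const, nsmul_eq_mul, Nat.card_Ioo, Nat.sub_zero,
        Nat.cast_sub (by omega)]
      push_cast
      ring
    rw [hcardIoo] at step1
    linarith
  -- conclude sInf M ≤ L
  have hmL : ((sInf M : ℕ) : ℝ) ≤ L := by
    by_contra hL
    push_neg at hL
    obtain ⟨n, hn⟩ := exists_nat_gt (max 2 ((((sInf M : ℕ) : ℝ) + E.card) / (((sInf M : ℕ) : ℝ) - L)))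
    have hn2 : 2 ≤ n := by
      have := (le_max_left 2 _).trans hn.le
      exact_mod_cast this
    have hn3 : (((sInf M : ℕ) : ℝ) + E.card) / (((sInf M : ℕ) : ℝ) - L) < n :=
      (le_max_right _ _).trans_lt hn
    rw [div_lt_iff₀ (by linarith)] at hn3
    have := key n hn2
    nlinarith
  refine ⟨ρ, hρ0, hρ1, S ρ, rfl, hsmem hρ0.le, htmem hρ1, ?_⟩
  calc ((E.filter (fun e => e.1 ∈ S ρ ∧ e.2 ∉ S ρ)).card : ℝ) = ((c ρ : ℕ) : ℝ) := rfl
    _ = ((sInf M : ℕ) : ℝ) := by rw [hρc]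
    _ ≤ L := hmL
end
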